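/- arXiv:1605.05613 — 7 statements merged into one kernel-verified Lean document; each statement's English description precedes it below -/
import Mathlib

section
/- Let i = (i_1, …, i_m) be a word and suppose 1 ≤ k < m with |i_k − i_{k+1}| ≥ 2. Let j be the word obtained from i by interchanging its k-th and (k+1)-st entries. Then the map sending (F^0, …, F^m) ∈ BS^i to (F^0, …, F^{k−1}, G, F^{k+1}, …, F^m), where G is defined by G(a) = F^{k−1}(a) for all a ≠ i_{k+1} and G(i_{k+1}) = F^{k+1}(i_{k+1}), is well defined (in particular, G is a complete flag and the new sequence lies in BS^j) and is a bijection from BS^i onto BS^j. -/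
set_option maxHeartbeats 2000000


noncomputable section

/-- The coordinate subspace `span{e₁, …, e_k}` of `ℂⁿ` (standard basis `eᵢ = Pi.single i 1`). -/
def stdSub (n k : ℕ) : Submodule ℂ (Fin n → ℂ) :=
  Submodule.span ℂ {v : Fin n → ℂ | ∃ t : Fin n, (t : ℕ) < k ∧ v = Pi.single t 1}

/-- A complete flag in `ℂⁿ`: a monotone function `{0,…,n} → Submodule ℂ ℂⁿ`
with `dim F(k) = k`. -/
def IsCompleteFlag (n : ℕ) (F : Fin (n + 1) → Submodule ℂ (Fin n → ℂ)) : Prop :=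
  Monotone F ∧ ∀ k : Fin (n + 1), Module.finrank ℂ (F k) = (k : ℕ)

/-- The standard flag `E(k) = span{e₁, …, e_k}`. -/
def stdFlag (n : ℕ) : Fin (n + 1) → Submodule ℂ (Fin n → ℂ) := fun k => stdSub n (k : ℕ)

/-- Magyar's description of the Bott–Samelson set `BS^i` for a word `i = (i_1, …, i_m)`:
sequences of complete flags `(F^0, …, F^m)` with `F^0 = E` the standard flag, and for each
`1 ≤ k ≤ m`, `F^k(a) = F^{k-1}(a)` for all `a ≠ i_k`.  (The word is indexed so that
`i ⟨k⟩` for `k : Fin m` is the letter `i_{k+1}`.) -/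
def InBS (n m : ℕ) (i : Fin m → ℕ)
    (F : Fin (m + 1) → Fin (n + 1) → Submodule ℂ (Fin n → ℂ)) : Prop :=
  (∀ k, IsCompleteFlag n (F k)) ∧ F 0 = stdFlag n ∧
    ∀ k : Fin m, ∀ a : Fin (n + 1), (a : ℕ) ≠ i k → F k.succ a = F k.castSucc a

/-- The braid-move map on sequences of flags: replace the flag at position `p+1` by the
flag `G` with `G(a) = F^p(a)` for `a ≠ c` and `G(c) = F^{p+2}(c)`. -/
def bsMap (n m : ℕ) (p : ℕ) (hp : p + 1 < m) (c : ℕ)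
    (F : Fin (m + 1) → Fin (n + 1) → Submodule ℂ (Fin n → ℂ)) :
    Fin (m + 1) → Fin (n + 1) → Submodule ℂ (Fin n → ℂ) :=
  Function.update F (⟨p + 1, by omega⟩ : Fin (m + 1))
    (fun a : Fin (n + 1) =>
      if (a : ℕ) = c then F ⟨p + 2, by omega⟩ a else F ⟨p, by omega⟩ a)

lemma bsMap_apply_ne (n m p : ℕ) (hp : p + 1 < m) (c : ℕ)
    (F : Fin (m + 1) → Fin (n + 1) → Submodule ℂ (Fin n → ℂ))
    (k : Fin (m + 1)) (hk : (k : ℕ) ≠ p + 1) :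
    bsMap n m p hp c F k = F k :=
  Function.update_of_ne (by simp [Fin.ext_iff]; omega) _ _

lemma bsMap_apply_eq (n m p : ℕ) (hp : p + 1 < m) (c : ℕ)
    (F : Fin (m + 1) → Fin (n + 1) → Submodule ℂ (Fin n → ℂ))
    (k : Fin (m + 1)) (hk : (k : ℕ) = p + 1) (a : Fin (n + 1)) :
    bsMap n m p hp c F k a =
      if (a : ℕ) = c then F ⟨p + 2, by omega⟩ a else F ⟨p, by omega⟩ a := by
  have hk2 : k = ⟨p + 1, Nat.lt_succ_of_lt hp⟩ := Fin.ext hk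
  subst hk2
  have h : bsMap n m p hp c F ⟨p + 1, Nat.lt_succ_of_lt hp⟩ =
      (fun a : Fin (n + 1) =>
        if (a : ℕ) = c then F ⟨p + 2, by omega⟩ a else F ⟨p, by omega⟩ a) :=
    Function.update_self _ _ _
  exact congrFun h a

lemma bsMap_bsMap (n m p : ℕ) (hp : p + 1 < m) (c d : ℕ) (hcd : d ≠ c)
    (F : Fin (m + 1) → Fin (n + 1) → Submodule ℂ (Fin n → ℂ))
    (h1 : ∀ a : Fin (n + 1), (a : ℕ) ≠ d → F ⟨p + 1, by omega⟩ a = F ⟨p, by omega⟩ a)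
    (h2 : ∀ a : Fin (n + 1), (a : ℕ) ≠ c → F ⟨p + 2, by omega⟩ a = F ⟨p + 1, by omega⟩ a) :
    bsMap n m p hp d (bsMap n m p hp c F) = F := by
  unfold bsMap
  rw [Function.update_idem]
  have e2 : Function.update F (⟨p + 1, by omega⟩ : Fin (m + 1))
      (fun a : Fin (n + 1) =>
        if (a : ℕ) = c then F ⟨p + 2, by omega⟩ a else F ⟨p, by omega⟩ a)
      (⟨p + 2, by omega⟩ : Fin (m + 1)) = F ⟨p + 2, by omega⟩ :=
    Function.update_of_ne (by simp [Fin.ext_iff]) _ _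
  have e0 : Function.update F (⟨p + 1, by omega⟩ : Fin (m + 1))
      (fun a : Fin (n + 1) =>
        if (a : ℕ) = c then F ⟨p + 2, by omega⟩ a else F ⟨p, by omega⟩ a)
      (⟨p, by omega⟩ : Fin (m + 1)) = F ⟨p, by omega⟩ :=
    Function.update_of_ne (by simp [Fin.ext_iff]) _ _
  rw [e0, e2]
  have : (fun a : Fin (n + 1) =>
      if (a : ℕ) = d then F ⟨p + 2, by omega⟩ a else F ⟨p, by omega⟩ a)
      = F ⟨p + 1, by omega⟩ := by
    funext a
    by_cases ha : (a : ℕ) = d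
    · rw [if_pos ha]
      exact h2 a (by omega)
    · rw [if_neg ha]
      exact (h1 a ha).symm
  rw [this, Function.update_eq_self]

lemma memBS (n m : ℕ) (hn : 2 ≤ n) (i : Fin m → ℕ)
    (hi : ∀ t, 1 ≤ i t ∧ i t ≤ n - 1)
    (p : ℕ) (hp : p + 1 < m)
    (hfar : 2 ≤ |((i ⟨p, by exact Nat.lt_of_succ_lt hp⟩ : ℕ) : ℤ) - ((i ⟨p + 1, hp⟩ : ℕ) : ℤ)|)
    (F : Fin (m + 1) → Fin (n + 1) → Submodule ℂ (Fin n → ℂ))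
    (hF : InBS n m i F) :
    InBS n m (i ∘ Equiv.swap ⟨p, by exact Nat.lt_of_succ_lt hp⟩ ⟨p + 1, hp⟩)
      (bsMap n m p hp (i ⟨p + 1, hp⟩) F) := by
  obtain ⟨hflag, h0, hstep⟩ := hF
  set c := i ⟨p + 1, hp⟩ with hc
  set d := i ⟨p, by omega⟩ with hd
  have hcb := hi ⟨p + 1, hp⟩
  rw [← hc] at hcb
  have hcd' : c + 2 ≤ d ∨ d + 2 ≤ c := by
    rcases abs_cases ((d : ℤ) - (c : ℤ)) with ⟨he, _⟩ | ⟨he, _⟩ <;> rw [he] at hfar <;> omega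
  have stepP : ∀ a : Fin (n + 1), (a : ℕ) ≠ d →
      F ⟨p + 1, by omega⟩ a = F ⟨p, by omega⟩ a := by
    intro a ha
    have := hstep ⟨p, by omega⟩ a (by rw [← hd]; exact ha)
    simpa [Fin.succ_mk, Fin.castSucc_mk] using this
  have stepP1 : ∀ a : Fin (n + 1), (a : ℕ) ≠ c →
      F ⟨p + 2, by omega⟩ a = F ⟨p + 1, by omega⟩ a := by
    intro a ha
    have := hstep ⟨p + 1, hp⟩ a (by rw [← hc]; exact ha)
    simpa [Fin.succ_mk, Fin.castSucc_mk] using this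
  refine ⟨?_, ?_, ?_⟩
  · intro k
    by_cases hk : k = (⟨p + 1, by omega⟩ : Fin (m + 1))
    · subst hk
      rw [show bsMap n m p hp c F ⟨p + 1, by omega⟩ =
          (fun a : Fin (n + 1) =>
            if (a : ℕ) = c then F ⟨p + 2, by omega⟩ a else F ⟨p, by omega⟩ a) from
          Function.update_self _ _ _]
      constructor
      · intro a b hab
        dsimp only
        have hab' : (a : ℕ) ≤ (b : ℕ) := hab
        by_cases ha : (a : ℕ) = c <;> by_cases hb : (b : ℕ) = c
        · have : a = b := Fin.ext (by omega)
          subst this; exact le_rfl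
        · rw [if_pos ha, if_neg hb]
          have hcb2 : c + 1 ≤ (b : ℕ) := by omega
          have hcn : c + 1 < n + 1 := by omega
          calc F ⟨p + 2, by omega⟩ a
              ≤ F ⟨p + 2, by omega⟩ ⟨c + 1, hcn⟩ := (hflag _).1 (by simp [Fin.le_def]; omega)
            _ = F ⟨p + 1, by omega⟩ ⟨c + 1, hcn⟩ := stepP1 _ (by simp)
            _ = F ⟨p, by omega⟩ ⟨c + 1, hcn⟩ := stepP _ (by simp; omega)
            _ ≤ F ⟨p, by omega⟩ b := (hflag _).1 (by simp [Fin.le_def]; omega)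
        · rw [if_neg ha, if_pos hb]
          have hac : (a : ℕ) < c := by omega
          have hcn : c - 1 < n + 1 := by omega
          calc F ⟨p, by omega⟩ a
              ≤ F ⟨p, by omega⟩ ⟨c - 1, hcn⟩ := (hflag _).1 (by simp [Fin.le_def]; omega)
            _ = F ⟨p + 1, by omega⟩ ⟨c - 1, hcn⟩ := (stepP _ (by simp; omega)).symm
            _ = F ⟨p + 2, by omega⟩ ⟨c - 1, hcn⟩ := (stepP1 _ (by simp; omega)).symm
            _ ≤ F ⟨p + 2, by omega⟩ b := (hflag _).1 (by simp [Fin.le_def]; omega)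
        · rw [if_neg ha, if_neg hb]
          exact (hflag _).1 hab
      · intro a
        dsimp only
        by_cases ha : (a : ℕ) = c
        · exact (congrArg (fun S : Submodule ℂ (Fin n → ℂ) => Module.finrank ℂ S) (if_pos ha)).trans ((hflag _).2 a)
        · exact (congrArg (fun S : Submodule ℂ (Fin n → ℂ) => Module.finrank ℂ S) (if_neg ha)).trans ((hflag _).2 a)
    · rw [show bsMap n m p hp c F k = F k from Function.update_of_ne hk _ _]
      exact hflag k
  · rw [show bsMap n m p hp c F 0 = F 0 from
      Function.update_of_ne (by simp [Fin.ext_iff]) _ _]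
    exact h0
  · intro k a ha
    by_cases hk : (k : ℕ) = p
    · have hk2 : k = (⟨p, Nat.lt_of_succ_lt hp⟩ : Fin m) := Fin.ext hk
      have ha' : (a : ℕ) ≠ c := by rwa [Function.comp_apply, hk2, Equiv.swap_apply_left, ← hc] at ha
      calc bsMap n m p hp c F k.succ a
          = if (a : ℕ) = c then F ⟨p + 2, by omega⟩ a else F ⟨p, by omega⟩ a :=
            bsMap_apply_eq n m p hp c F k.succ (by simp [hk]) a
        _ = F ⟨p, by omega⟩ a := if_neg ha'
        _ = F k.castSucc a := by
            rw [show k.castSucc = (⟨p, by omega⟩ : Fin (m + 1)) from Fin.ext (by simp [hk])]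
        _ = bsMap n m p hp c F k.castSucc a :=
            (congrFun (bsMap_apply_ne n m p hp c F k.castSucc
              (by simp only [Fin.coe_castSucc]; omega)) a).symm
    · by_cases hk' : (k : ℕ) = p + 1
      · have hk2 : k = (⟨p + 1, hp⟩ : Fin m) := Fin.ext hk'
        have ha' : (a : ℕ) ≠ d := by
          rwa [Function.comp_apply, hk2, Equiv.swap_apply_right, ← hd] at ha
        have L : bsMap n m p hp c F k.succ a = F ⟨p + 2, by omega⟩ a := by
          rw [congrFun (bsMap_apply_ne n m p hp c F k.succ (by simp [hk'] )) a,
            show k.succ = (⟨p + 2, by omega⟩ : Fin (m + 1)) from Fin.ext (by simp [hk'])]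
        have R : bsMap n m p hp c F k.castSucc a =
            if (a : ℕ) = c then F ⟨p + 2, by omega⟩ a else F ⟨p, by omega⟩ a :=
          bsMap_apply_eq n m p hp c F k.castSucc (by simp [hk']) a
        rw [L, R]
        by_cases hac : (a : ℕ) = c
        · rw [if_pos hac]
        · rw [if_neg hac, stepP1 a hac, stepP a ha']
      · have hswap : Equiv.swap (⟨p, by omega⟩ : Fin m) ⟨p + 1, hp⟩ k = k :=
          Equiv.swap_apply_of_ne_of_ne (by simp [Fin.ext_iff]; omega)
            (by simp [Fin.ext_iff]; omega)
        rw [Function.comp_apply, hswap] at ha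
        rw [congrFun (bsMap_apply_ne n m p hp c F k.succ (by simp; omega)) a,
          congrFun (bsMap_apply_ne n m p hp c F k.castSucc (by simp [Fin.coe_castSucc]; omega)) a]
        exact hstep k a ha

/-- if the word `j` is obtained from `i` by interchanging its `k`-th and
`(k+1)`-st entries (here 0-indexed as positions `p` and `p+1`), and these entries differ
by at least 2, then replacing the flag `F^{p+1}` by the flag `G` with
`G(a) = F^p(a)` for `a ≠ i_{p+1}` and `G(i_{p+1}) = F^{p+2}(i_{p+1})` is a well-defined
bijection from `BS^i` onto `BS^j`. -/
theorem stmt0 (n m : ℕ) (hn : 2 ≤ n) (i : Fin m → ℕ)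
    (hi : ∀ t, 1 ≤ i t ∧ i t ≤ n - 1)
    (p : ℕ) (hp : p + 1 < m)
    (hfar : 2 ≤ |((i ⟨p, by omega⟩ : ℕ) : ℤ) - ((i ⟨p + 1, hp⟩ : ℕ) : ℤ)|) :
    Set.BijOn
      (fun F : Fin (m + 1) → Fin (n + 1) → Submodule ℂ (Fin n → ℂ) =>
        Function.update F (⟨p + 1, by omega⟩ : Fin (m + 1))
          (fun a : Fin (n + 1) =>
            if (a : ℕ) = i ⟨p + 1, hp⟩ then F ⟨p + 2, by omega⟩ a
            else F ⟨p, by omega⟩ a))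
      {F | InBS n m i F}
      {F | InBS n m (i ∘ Equiv.swap ⟨p, by omega⟩ ⟨p + 1, hp⟩) F} := by
  have hcd' : i ⟨p, by omega⟩ ≠ i ⟨p + 1, hp⟩ := by
    intro h
    rw [h, sub_self, abs_zero] at hfar
    norm_num at hfar
  show Set.BijOn (bsMap n m p hp (i ⟨p + 1, hp⟩)) _ _
  set j : Fin m → ℕ := i ∘ Equiv.swap ⟨p, by omega⟩ ⟨p + 1, hp⟩ with hj
  have hjp : j ⟨p, by omega⟩ = i ⟨p + 1, hp⟩ := by
    simp [hj, Equiv.swap_apply_left]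
  have hjp1 : j ⟨p + 1, hp⟩ = i ⟨p, by omega⟩ := by
    simp [hj, Equiv.swap_apply_right]
  have hji : j ∘ Equiv.swap (⟨p, by omega⟩ : Fin m) ⟨p + 1, hp⟩ = i := by
    funext t
    simp [hj, Equiv.swap_apply_self]
  have hfarj : 2 ≤ |((j ⟨p, by omega⟩ : ℕ) : ℤ) - ((j ⟨p + 1, hp⟩ : ℕ) : ℤ)| := by
    rw [hjp, hjp1, abs_sub_comm]; exact hfar
  have hij : ∀ t, 1 ≤ j t ∧ j t ≤ n - 1 := fun t => hi _
  refine Set.InvOn.bijOn (f' := bsMap n m p hp (i ⟨p, by omega⟩)) ⟨?_, ?_⟩ ?_ ?_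
  · -- left inverse on BS^i
    intro F hF
    obtain ⟨_, _, hstep⟩ := hF
    refine bsMap_bsMap n m p hp (i ⟨p + 1, hp⟩) (i ⟨p, by omega⟩) hcd' F ?_ ?_
    · intro a ha
      have := hstep ⟨p, by omega⟩ a ha
      simpa [Fin.succ_mk, Fin.castSucc_mk] using this
    · intro a ha
      have := hstep ⟨p + 1, hp⟩ a ha
      simpa [Fin.succ_mk, Fin.castSucc_mk] using this
  · -- right inverse on BS^j
    intro F hF
    obtain ⟨_, _, hstep⟩ := hF
    refine bsMap_bsMap n m p hp (i ⟨p, by omega⟩) (i ⟨p + 1, hp⟩) (Ne.symm hcd') F ?_ ?_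
    · intro a ha
      have := hstep ⟨p, by omega⟩ a (by rw [hjp]; exact ha)
      simpa [Fin.succ_mk, Fin.castSucc_mk] using this
    · intro a ha
      have := hstep ⟨p + 1, hp⟩ a (by rw [hjp1]; exact ha)
      simpa [Fin.succ_mk, Fin.castSucc_mk] using this
  · intro F hF
    exact memBS n m hn i hi p hp hfar F hF
  · intro F hF
    have := memBS n m hn j hij p hp hfarj F hF
    rw [hji, hjp1] at this
    exact this
end
end

section
/- Let i = (i_1, …, i_m) be a word. The map Φ sending (F^0, …, F^m) ∈ BS^i to the tuple (V_1, …, V_m) with V_k = F^k(i_k) is injective, and its image is exactly the set of tuples (V_1, …, V_m) of ℂ-subspaces of V such that for every 1 ≤ k ≤ m: dim V_k = i_k and W_k^− ⊆ V_k ⊆ W_k^+, where W_k^− is defined to be V_j for the largest index j < k with i_j = i_k − 1 (and W_k^− = E(i_k − 1) if no such j exists), and W_k^+ is defined to be V_j for the largest index j < k with i_j = i_k + 1 (and W_k^+ = E(i_k + 1) if no such j exists). -/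
noncomputable section

lemma finrank_stdSub (n a : ℕ) (h : a ≤ n) : Module.finrank ℂ (stdSub n a) = a := by
  classical
  set S : Set (Fin n) := {t : Fin n | (t : ℕ) < a} with hS
  have hset : {v : Fin n → ℂ | ∃ t : Fin n, (t : ℕ) < a ∧ v = Pi.single t 1}
      = Set.range (fun t : S => (Pi.basisFun ℂ (Fin n)) t.1) := by
    ext v
    constructor
    · rintro ⟨t, ht, rfl⟩; exact ⟨⟨t, ht⟩, by simp [Pi.basisFun_apply]⟩
    · rintro ⟨⟨t, ht⟩, rfl⟩; exact ⟨t, ht, by simp [Pi.basisFun_apply]⟩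
  have hli : LinearIndependent ℂ (fun t : S => (Pi.basisFun ℂ (Fin n)) t.1) :=
    (Pi.basisFun ℂ (Fin n)).linearIndependent.comp _ Subtype.val_injective
  rw [stdSub, hset, finrank_span_eq_card hli]
  have e : Fin a ≃ S :=
    { toFun := fun s => ⟨⟨s.1, lt_of_lt_of_le s.2 h⟩, s.2⟩
      invFun := fun t => ⟨t.1.1, t.2⟩
      left_inv := fun s => rfl
      right_inv := fun t => rfl }
  rw [← Fintype.card_congr e, Fintype.card_fin]

lemma stdSub_mono (n : ℕ) {a b : ℕ} (h : a ≤ b) : stdSub n a ≤ stdSub n b :=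
  Submodule.span_mono (fun v => by rintro ⟨t, ht, rfl⟩; exact ⟨t, lt_of_lt_of_le ht h, rfl⟩)

def st (n : ℕ) (I : ℕ → ℕ) (W : ℕ → Submodule ℂ (Fin n → ℂ)) : ℕ → ℕ → Submodule ℂ (Fin n → ℂ)
  | 0, a => stdSub n a
  | k+1, a => if I k = a then W k else st n I W k a

lemma st_zero (n : ℕ) (I : ℕ → ℕ) (W : ℕ → Submodule ℂ (Fin n → ℂ)) (a : ℕ) :
    st n I W 0 a = stdSub n a := rfl

lemma st_pos (n : ℕ) (I : ℕ → ℕ) (W : ℕ → Submodule ℂ (Fin n → ℂ)) {k a : ℕ} (h : I k = a) :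
    st n I W (k+1) a = W k := by simp [st, h]

lemma st_step (n : ℕ) (I : ℕ → ℕ) (W : ℕ → Submodule ℂ (Fin n → ℂ)) {k a : ℕ} (h : I k ≠ a) :
    st n I W (k+1) a = st n I W k a := by simp [st, h]

lemma st_none (n : ℕ) (I : ℕ → ℕ) (W : ℕ → Submodule ℂ (Fin n → ℂ)) {k a : ℕ}
    (h : ∀ j, j < k → I j ≠ a) : st n I W k a = stdSub n a := by
  induction k with
  | zero => rfl
  | succ k ih =>
    rw [st_step n I W (h k (by omega)), ih (fun j hj => h j (by omega))]

lemma st_last (n : ℕ) (I : ℕ → ℕ) (W : ℕ → Submodule ℂ (Fin n → ℂ)) {k j a : ℕ}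
    (hj : j < k) (hja : I j = a) (hl : ∀ j', j < j' → j' < k → I j' ≠ a) :
    st n I W k a = W j := by
  induction k with
  | zero => omega
  | succ k ih =>
    rcases eq_or_lt_of_le (Nat.lt_succ_iff.mp hj) with rfl | hjk
    · exact st_pos n I W hja
    · rw [st_step n I W (hl k hjk (by omega)), ih hjk (fun j' h1 h2 => hl j' h1 (by omega))]

lemma exists_last {k : ℕ} {P : ℕ → Prop} (h : ∃ j, j < k ∧ P j) :
    ∃ j, j < k ∧ P j ∧ ∀ j', j < j' → j' < k → ¬ P j' := by
  classical
  induction k with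
  | zero => omega
  | succ k ih =>
    by_cases hk : P k
    · exact ⟨k, by omega, hk, fun j' h1 h2 => by omega⟩
    · obtain ⟨j, hj, hPj⟩ := h
      have hj' : j < k := by
        rcases Nat.lt_succ_iff_lt_or_eq.mp hj with h | rfl
        · exact h
        · exact absurd hPj hk
      obtain ⟨j0, h1, h2, h3⟩ := ih ⟨j, hj', hPj⟩
      refine ⟨j0, by omega, h2, fun j' ha hb => ?_⟩
      rcases Nat.lt_succ_iff_lt_or_eq.mp hb with h | rfl
      · exact h3 j' ha h
      · exact hk

def extI (m : ℕ) (i : Fin m → ℕ) : ℕ → ℕ := fun t => if h : t < m then i ⟨t, h⟩ else 0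

def extV (n m : ℕ) (V : Fin m → Submodule ℂ (Fin n → ℂ)) : ℕ → Submodule ℂ (Fin n → ℂ) :=
  fun t => if h : t < m then V ⟨t, h⟩ else ⊥

lemma extI_lt (m : ℕ) (i : Fin m → ℕ) {t : ℕ} (h : t < m) : extI m i t = i ⟨t, h⟩ := dif_pos h

lemma extV_lt (n m : ℕ) (V : Fin m → Submodule ℂ (Fin n → ℂ)) {t : ℕ} (h : t < m) :
    extV n m V t = V ⟨t, h⟩ := dif_pos h

lemma bs_st (n m : ℕ) (i : Fin m → ℕ) (hik : ∀ k, i k < n + 1)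
    (F : Fin (m+1) → Fin (n+1) → Submodule ℂ (Fin n → ℂ)) (hF : InBS n m i F)
    (V : Fin m → Submodule ℂ (Fin n → ℂ))
    (hΦ : ∀ k : Fin m, F k.succ ⟨i k, hik k⟩ = V k) :
    ∀ K : ℕ, ∀ hK : K < m + 1, ∀ a : Fin (n+1),
      F ⟨K, hK⟩ a = st n (extI m i) (extV n m V) K (a : ℕ) := by
  intro K
  induction K with
  | zero =>
    intro hK a
    have h0 : (⟨0, hK⟩ : Fin (m+1)) = 0 := rfl
    rw [h0, hF.2.1, st_zero]
    rfl
  | succ K ih =>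
    intro hK a
    have hKm : K < m := by omega
    by_cases h : (a : ℕ) = i ⟨K, hKm⟩
    · have ha : a = ⟨i ⟨K, hKm⟩, hik _⟩ := Fin.ext h
      have hsucc : (⟨K+1, hK⟩ : Fin (m+1)) = (⟨K, hKm⟩ : Fin m).succ := rfl
      rw [hsucc, ha, hΦ ⟨K, hKm⟩]
      show V ⟨K, hKm⟩ = st n (extI m i) (extV n m V) (K+1) (i ⟨K, hKm⟩)
      rw [st_pos n _ _ (extI_lt m i hKm), extV_lt n m V hKm]
    · have hstep := hF.2.2 ⟨K, hKm⟩ a (fun hc => h hc)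
      have hsucc : (⟨K+1, hK⟩ : Fin (m+1)) = (⟨K, hKm⟩ : Fin m).succ := rfl
      have hcast : ((⟨K, hKm⟩ : Fin m)).castSucc = (⟨K, by omega⟩ : Fin (m+1)) := rfl
      rw [hsucc, hstep, hcast, ih (by omega) a,
        st_step n _ _ (by rw [extI_lt m i hKm]; omega)]

lemma dim_st (n m : ℕ) (i : Fin m → ℕ) (V : Fin m → Submodule ℂ (Fin n → ℂ))
    (hd : ∀ k : Fin m, Module.finrank ℂ (V k) = i k)
    {K a : ℕ} (hK : K ≤ m) (ha : a ≤ n) :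
    Module.finrank ℂ (st n (extI m i) (extV n m V) K a) = a := by
  classical
  by_cases hex : ∃ j, j < K ∧ extI m i j = a
  · obtain ⟨j, hjK, hja, hl⟩ := exists_last hex
    have hjm : j < m := by omega
    rw [st_last n _ _ hjK hja hl, extV_lt n m V hjm, hd]
    rw [extI_lt m i hjm] at hja
    exact hja
  · push_neg at hex
    rw [st_none n _ _ hex, finrank_stdSub n a ha]

lemma mono_st (n m : ℕ) (i : Fin m → ℕ) (hi : ∀ t, 1 ≤ i t ∧ i t ≤ n - 1)
    (V : Fin m → Submodule ℂ (Fin n → ℂ))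
    (hlow : ∀ k : Fin m, (∃ j : Fin m, j < k ∧ i j = i k - 1 ∧
        (∀ j' : Fin m, j < j' → j' < k → i j' ≠ i k - 1) ∧ V j ≤ V k) ∨
        ((∀ j : Fin m, j < k → i j ≠ i k - 1) ∧ stdSub n (i k - 1) ≤ V k))
    (hup : ∀ k : Fin m, (∃ j : Fin m, j < k ∧ i j = i k + 1 ∧
        (∀ j' : Fin m, j < j' → j' < k → i j' ≠ i k + 1) ∧ V k ≤ V j) ∨
        ((∀ j : Fin m, j < k → i j ≠ i k + 1) ∧ V k ≤ stdSub n (i k + 1))) :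
    ∀ K : ℕ, K ≤ m → ∀ a : ℕ,
      st n (extI m i) (extV n m V) K a ≤ st n (extI m i) (extV n m V) K (a+1) := by
  intro K
  induction K with
  | zero =>
    intro _ a
    rw [st_zero, st_zero]
    exact stdSub_mono n (by omega)
  | succ K ih =>
    intro hK a
    have hKm : K < m := by omega
    have ihm := ih (by omega)
    have hIK : extI m i K = i ⟨K, hKm⟩ := extI_lt m i hKm
    have hik1 : 1 ≤ i ⟨K, hKm⟩ := (hi _).1
    by_cases h1 : extI m i K = a
    · rw [st_pos n _ _ h1, st_step n _ _ (by omega : extI m i K ≠ a + 1), extV_lt n m V hKm]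
      rcases hup ⟨K, hKm⟩ with ⟨j, hjk, hj, hl, hle⟩ | ⟨hnone, hle⟩
      · have hjK : (j : ℕ) < K := Fin.lt_def.mp hjk
        have heq : st n (extI m i) (extV n m V) K (a+1) = extV n m V j.val := by
          apply st_last n _ _ hjK
          · rw [extI_lt m i j.isLt, Fin.eta, hj]; omega
          · intro j' hja' hjb'
            have hj'm : j' < m := by omega
            rw [extI_lt m i hj'm]
            have h5 := hl ⟨j', hj'm⟩ (Fin.lt_def.mpr hja') (Fin.lt_def.mpr hjb')
            omega
        rw [heq, extV_lt n m V j.isLt, Fin.eta]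
        exact hle
      · have heq : st n (extI m i) (extV n m V) K (a+1) = stdSub n (a+1) := by
          apply st_none
          intro j hj
          have hjm : j < m := by omega
          rw [extI_lt m i hjm]
          have h5 := hnone ⟨j, hjm⟩ (Fin.lt_def.mpr hj)
          omega
        rw [heq]
        have h6 : a + 1 = i ⟨K, hKm⟩ + 1 := by omega
        rw [h6]
        exact hle
    · by_cases h2 : extI m i K = a + 1
      · rw [st_step n _ _ h1, st_pos n _ _ h2, extV_lt n m V hKm]
        rcases hlow ⟨K, hKm⟩ with ⟨j, hjk, hj, hl, hle⟩ | ⟨hnone, hle⟩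
        · have hjK : (j : ℕ) < K := Fin.lt_def.mp hjk
          have heq : st n (extI m i) (extV n m V) K a = extV n m V j.val := by
            apply st_last n _ _ hjK
            · rw [extI_lt m i j.isLt, Fin.eta, hj]; omega
            · intro j' hja' hjb'
              have hj'm : j' < m := by omega
              rw [extI_lt m i hj'm]
              have h5 := hl ⟨j', hj'm⟩ (Fin.lt_def.mpr hja') (Fin.lt_def.mpr hjb')
              omega
          rw [heq, extV_lt n m V j.isLt, Fin.eta]
          exact hle
        · have heq : st n (extI m i) (extV n m V) K a = stdSub n a := by
            apply st_none
            intro j hj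
            have hjm : j < m := by omega
            rw [extI_lt m i hjm]
            have h5 := hnone ⟨j, hjm⟩ (Fin.lt_def.mpr hj)
            omega
          rw [heq]
          have h6 : a = i ⟨K, hKm⟩ - 1 := by omega
          rw [h6]
          exact hle
      · rw [st_step n _ _ h1, st_step n _ _ h2]
        exact ihm a

/-- the map `Φ : BS^i → (V_1, …, V_m)`, `V_k = F^k(i_k)`, is injective and its
image is the set of tuples with `dim V_k = i_k` and `W_k^- ⊆ V_k ⊆ W_k^+`, where `W_k^-` is
`V_j` for the largest `j < k` with `i_j = i_k - 1` (resp. `E(i_k - 1)` if there is no such `j`)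
and `W_k^+` is `V_j` for the largest `j < k` with `i_j = i_k + 1` (resp. `E(i_k + 1)`). -/
theorem stmt1 (n m : ℕ) (hn : 2 ≤ n) (i : Fin m → ℕ)
    (hi : ∀ t, 1 ≤ i t ∧ i t ≤ n - 1) :
    let Φ : (Fin (m + 1) → Fin (n + 1) → Submodule ℂ (Fin n → ℂ)) →
        (Fin m → Submodule ℂ (Fin n → ℂ)) :=
      fun F k => F k.succ ⟨i k, by have := (hi k).2; omega⟩
    Set.InjOn Φ {F | InBS n m i F} ∧
      Φ '' {F | InBS n m i F} =
        {V : Fin m → Submodule ℂ (Fin n → ℂ) |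
          ∀ k : Fin m,
            Module.finrank ℂ (V k) = i k ∧
            ((∃ j : Fin m, j < k ∧ i j = i k - 1 ∧
                (∀ j' : Fin m, j < j' → j' < k → i j' ≠ i k - 1) ∧ V j ≤ V k) ∨
              ((∀ j : Fin m, j < k → i j ≠ i k - 1) ∧ stdSub n (i k - 1) ≤ V k)) ∧
            ((∃ j : Fin m, j < k ∧ i j = i k + 1 ∧
                (∀ j' : Fin m, j < j' → j' < k → i j' ≠ i k + 1) ∧ V k ≤ V j) ∨
              ((∀ j : Fin m, j < k → i j ≠ i k + 1) ∧ V k ≤ stdSub n (i k + 1)))} := by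
  
  intro Φ
  have hik : ∀ t : Fin m, i t < n + 1 := fun t => by have := (hi t).2; omega
  have key : ∀ F, InBS n m i F → ∀ k : Fin m, ∀ c : ℕ, ∀ hc : c ≤ n, c ≠ i k →
      F k.succ ⟨c, by omega⟩ = st n (extI m i) (extV n m (Φ F)) k.val c := by
    intro F hF k c hc hne
    have hA := bs_st n m i hik F hF (Φ F) (fun t => rfl) k.val (by omega) ⟨c, by omega⟩
    have hstep := hF.2.2 k ⟨c, by omega⟩ hne
    rw [hstep]
    exact hA
  constructor
  · -- injectivity
    intro F hF G hG h
    funext k a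
    have h1 := bs_st n m i hik F hF (Φ F) (fun t => rfl) k.val k.isLt a
    have h2 := bs_st n m i hik G hG (Φ F) (fun t => by rw [h]) k.val k.isLt a
    exact h1.trans h2.symm
  · apply Set.ext
    intro V
    constructor
    · rintro ⟨F, hF, rfl⟩
      intro k
      refine ⟨(hF.1 k.succ).2 ⟨i k, hik k⟩, ?_, ?_⟩
      · -- lower bound
        have hc : i k - 1 ≤ n := by have := (hi k).2; omega
        have hne : i k - 1 ≠ i k := by have := (hi k).1; omega
        have hchain : st n (extI m i) (extV n m (Φ F)) k.val (i k - 1) ≤ Φ F k := by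
          rw [← key F hF k (i k - 1) hc hne]
          exact (hF.1 k.succ).1 (Fin.mk_le_mk.mpr (by omega))
        by_cases hex : ∃ j : Fin m, j < k ∧ i j = i k - 1
        · obtain ⟨j, hj, hji⟩ := hex
          obtain ⟨jn, h1, h2, h3⟩ := exists_last (k := (k : ℕ))
            (P := fun jn => extI m i jn = i k - 1) ⟨j.val, Fin.lt_def.mp hj,
            by show extI m i j.val = _; rw [extI_lt m i j.isLt, Fin.eta]; exact hji⟩
          have hjm : jn < m := by have := k.isLt; omega
          left
          refine ⟨⟨jn, hjm⟩, Fin.lt_def.mpr h1,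
            by rw [extI_lt m i hjm] at h2; exact h2, ?_, ?_⟩
          · intro j' ha' hb'
            have h4 := h3 j'.val (Fin.lt_def.mp ha') (Fin.lt_def.mp hb')
            rw [extI_lt m i j'.isLt, Fin.eta] at h4
            exact h4
          · rw [st_last n _ _ h1 h2 h3, extV_lt n m (Φ F) hjm] at hchain
            exact hchain
        · right
          have hnone : ∀ jn, jn < (k : ℕ) → extI m i jn ≠ i k - 1 := by
            intro jn hjn
            have hjm : jn < m := by have := k.isLt; omega
            rw [extI_lt m i hjm]
            exact fun hcc => hex ⟨⟨jn, hjm⟩, Fin.lt_def.mpr hjn, hcc⟩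
          rw [st_none n _ _ hnone] at hchain
          exact ⟨fun j hj hcc => hex ⟨j, hj, hcc⟩, hchain⟩
      · -- upper bound
        have hc : i k + 1 ≤ n := by have := (hi k).2; omega
        have hne : i k + 1 ≠ i k := by omega
        have hchain : Φ F k ≤ st n (extI m i) (extV n m (Φ F)) k.val (i k + 1) := by
          rw [← key F hF k (i k + 1) hc hne]
          exact (hF.1 k.succ).1 (Fin.mk_le_mk.mpr (by omega))
        by_cases hex : ∃ j : Fin m, j < k ∧ i j = i k + 1
        · obtain ⟨j, hj, hji⟩ := hex
          obtain ⟨jn, h1, h2, h3⟩ := exists_last (k := (k : ℕ))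
            (P := fun jn => extI m i jn = i k + 1) ⟨j.val, Fin.lt_def.mp hj,
            by show extI m i j.val = _; rw [extI_lt m i j.isLt, Fin.eta]; exact hji⟩
          have hjm : jn < m := by have := k.isLt; omega
          left
          refine ⟨⟨jn, hjm⟩, Fin.lt_def.mpr h1,
            by rw [extI_lt m i hjm] at h2; exact h2, ?_, ?_⟩
          · intro j' ha' hb'
            have h4 := h3 j'.val (Fin.lt_def.mp ha') (Fin.lt_def.mp hb')
            rw [extI_lt m i j'.isLt, Fin.eta] at h4
            exact h4
          · rw [st_last n _ _ h1 h2 h3, extV_lt n m (Φ F) hjm] at hchain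
            exact hchain
        · right
          have hnone : ∀ jn, jn < (k : ℕ) → extI m i jn ≠ i k + 1 := by
            intro jn hjn
            have hjm : jn < m := by have := k.isLt; omega
            rw [extI_lt m i hjm]
            exact fun hcc => hex ⟨⟨jn, hjm⟩, Fin.lt_def.mpr hjn, hcc⟩
          rw [st_none n _ _ hnone] at hchain
          exact ⟨fun j hj hcc => hex ⟨j, hj, hcc⟩, hchain⟩
    · intro hV
      refine ⟨fun k a => st n (extI m i) (extV n m V) k.val a.val, ?_, ?_⟩
      · show InBS n m i _
        refine ⟨?_, ?_, ?_⟩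
        · intro k
          constructor
          · intro a b hab
            exact monotone_nat_of_le_succ
              (mono_st n m i hi V (fun t => (hV t).2.1) (fun t => (hV t).2.2) k.val
                (Nat.lt_succ_iff.mp k.isLt)) (Fin.le_def.mp hab)
          · intro a
            exact dim_st n m i V (fun t => (hV t).1) (Nat.lt_succ_iff.mp k.isLt)
              (Nat.lt_succ_iff.mp a.isLt)
        · funext a
          show st n (extI m i) (extV n m V) ((0 : Fin (m + 1)) : ℕ) a.val = stdFlag n a
          rw [Fin.val_zero, st_zero]
          rfl
        · intro k a ha
          show st n (extI m i) (extV n m V) (k.val + 1) a.val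
            = st n (extI m i) (extV n m V) k.val a.val
          exact st_step n _ _ (by rw [extI_lt m i k.isLt, Fin.eta]; omega)
      · funext k
        show st n (extI m i) (extV n m V) (k.val + 1) (i k) = V k
        rw [st_pos n _ _ (by rw [extI_lt m i k.isLt, Fin.eta]), extV_lt n m V k.isLt, Fin.eta]
end
end

section
/- Let i = (i_1, …, i_m) be a word. Then the set of elements (F^0, …, F^m) of BS^i in which every subspace F^k(a) (for 0 ≤ k ≤ m and 0 ≤ a ≤ n) is a coordinate subspace is finite of cardinality 2^m. -/
noncomputable section

/-- A coordinate subspace of `ℂⁿ`: the span of a subset of the standard basis vectors. -/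
def IsCoordSub (n : ℕ) (W : Submodule ℂ (Fin n → ℂ)) : Prop :=
  ∃ S : Set (Fin n), W = Submodule.span ℂ ((fun t : Fin n => Pi.single t (1 : ℂ)) '' S)

namespace Stmt3Aux

/-! ### Linear algebra of coordinate subspaces -/

def bv (n : ℕ) (t : Fin n) : Fin n → ℂ := Pi.single t 1

lemma bv_fun (n : ℕ) : bv n = ⇑(Pi.basisFun ℂ (Fin n)) := by
  funext t; simp [bv]

def spanS (n : ℕ) (S : Finset (Fin n)) : Submodule ℂ (Fin n → ℂ) :=
  Submodule.span ℂ ((fun t : Fin n => Pi.single t (1 : ℂ)) '' ↑S)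

lemma spanS_eq (n : ℕ) (S : Finset (Fin n)) :
    spanS n S = Submodule.span ℂ (⇑(Pi.basisFun ℂ (Fin n)) '' ↑S) := by
  rw [spanS, show (fun t : Fin n => Pi.single t (1:ℂ)) = bv n from rfl, bv_fun]

lemma mem_spanS {n : ℕ} {S : Finset (Fin n)} {t : Fin n} :
    bv n t ∈ spanS n S ↔ t ∈ S := by
  rw [spanS_eq, bv_fun]
  simpa using (Pi.basisFun ℂ (Fin n)).self_mem_span_image (i := t) (s := ↑S)

lemma spanS_le_iff {n : ℕ} {S T : Finset (Fin n)} : spanS n S ≤ spanS n T ↔ S ⊆ T := by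
  constructor
  · intro h t ht
    exact mem_spanS.1 (h (mem_spanS.2 ht))
  · intro h
    exact Submodule.span_mono (Set.image_mono (by exact_mod_cast h))

lemma spanS_injective {n : ℕ} : Function.Injective (spanS n) := by
  intro S T h
  exact le_antisymm (spanS_le_iff.1 h.le) (spanS_le_iff.1 h.ge)

lemma finrank_spanS (n : ℕ) (S : Finset (Fin n)) :
    Module.finrank ℂ (spanS n S) = S.card := by
  rw [spanS_eq]
  have hli : LinearIndependent ℂ ((↑) : (⇑(Pi.basisFun ℂ (Fin n)) '' ↑S) → (Fin n → ℂ)) :=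
    ((Pi.basisFun ℂ (Fin n)).linearIndependent.linearIndepOn_id).mono
      (Set.image_subset_range _ _)
  rw [finrank_span_set_eq_card (s := ⇑(Pi.basisFun ℂ (Fin n)) '' ↑S) hli,
    Set.toFinset_image, Finset.card_image_of_injective _ (Pi.basisFun ℂ (Fin n)).injective]
  simp

open Classical in
def Sfin (n : ℕ) (W : Submodule ℂ (Fin n → ℂ)) : Finset (Fin n) :=
  Finset.univ.filter (fun t => bv n t ∈ W)

lemma Sfin_spanS {n : ℕ} (S : Finset (Fin n)) : Sfin n (spanS n S) = S := by
  ext t; simp [Sfin, mem_spanS]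

lemma coord_spanS {n : ℕ} {W : Submodule ℂ (Fin n → ℂ)} (h : IsCoordSub n W) :
    W = spanS n (Sfin n W) := by
  obtain ⟨S, rfl⟩ := h
  have h1 : Submodule.span ℂ ((fun t : Fin n => Pi.single t (1:ℂ)) '' S)
      = spanS n (Set.toFinite S).toFinset := by
    rw [spanS, Set.Finite.coe_toFinset]
  rw [h1, Sfin_spanS]

/-! ### Coordinate sets -/

def loSet (n a : ℕ) : Finset (Fin n) := Finset.univ.filter (fun t => (t : ℕ) < a)

lemma mem_loSet {n a : ℕ} {t : Fin n} : t ∈ loSet n a ↔ (t : ℕ) < a := by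
  simp [loSet]

lemma card_loSet {n a : ℕ} (h : a ≤ n) : (loSet n a).card = a := by
  have : loSet n a = (Finset.univ : Finset (Fin a)).map
      ⟨Fin.castLE h, Fin.castLE_injective h⟩ := by
    ext t
    simp only [mem_loSet, Finset.mem_map, Finset.mem_univ, true_and,
      Function.Embedding.coeFn_mk]
    constructor
    · intro ht; exact ⟨⟨(t : ℕ), ht⟩, by ext; simp⟩
    · rintro ⟨s, rfl⟩; exact s.isLt
  rw [this, Finset.card_map]; simp

def posSet {n : ℕ} (σ : Equiv.Perm (Fin n)) (a : ℕ) : Finset (Fin n) :=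
  (loSet n a).map σ.toEmbedding

lemma mem_posSet {n : ℕ} {σ : Equiv.Perm (Fin n)} {a : ℕ} {x : Fin n} :
    x ∈ posSet σ a ↔ ((σ.symm x : Fin n) : ℕ) < a := by
  rw [posSet, Finset.mem_map_equiv, mem_loSet]

lemma card_posSet {n : ℕ} (σ : Equiv.Perm (Fin n)) {a : ℕ} (h : a ≤ n) :
    (posSet σ a).card = a := by
  rw [posSet, Finset.card_map, card_loSet h]

lemma posSet_mono {n : ℕ} (σ : Equiv.Perm (Fin n)) {a b : ℕ} (h : a ≤ b) :
    posSet σ a ⊆ posSet σ b := by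
  intro x hx; rw [mem_posSet] at *; omega

lemma posSet_one {n a : ℕ} : posSet (1 : Equiv.Perm (Fin n)) a = loSet n a := by
  ext x; rw [mem_posSet, mem_loSet]; rfl

lemma stdSub_eq_spanS (n a : ℕ) : stdSub n a = spanS n (loSet n a) := by
  rw [stdSub, spanS]
  congr 1
  ext v
  simp only [Set.mem_setOf_eq, Set.mem_image, Finset.mem_coe, mem_loSet]
  constructor
  · rintro ⟨t, ht, rfl⟩; exact ⟨t, ht, rfl⟩
  · rintro ⟨t, ht, rfl⟩; exact ⟨t, ht, rfl⟩

/-! ### Simple transpositions -/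

def sw (n j : ℕ) : Equiv.Perm (Fin n) :=
  if h : 0 < j ∧ j < n then
    Equiv.swap ⟨j - 1, lt_of_le_of_lt (Nat.sub_le j 1) h.2⟩ ⟨j, h.2⟩ else 1

lemma sw_symm (n j : ℕ) : (sw n j).symm = sw n j := by
  rw [sw]; split
  · exact Equiv.symm_swap _ _
  · rfl

lemma mul_sw_symm_apply {n j : ℕ} (σ : Equiv.Perm (Fin n)) (x : Fin n) :
    (σ * sw n j).symm x = sw n j (σ.symm x) := by
  rw [show (σ * sw n j).symm x = (sw n j).symm (σ.symm x) from rfl, sw_symm]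

lemma sw_val {n j : ℕ} (hj : 0 < j) (hjn : j < n) (y : Fin n) :
    ((sw n j y : Fin n) : ℕ) =
      if (y : ℕ) = j - 1 then j else if (y : ℕ) = j then j - 1 else (y : ℕ) := by
  have hj1 : j - 1 < n := lt_of_le_of_lt (Nat.sub_le j 1) hjn
  rw [sw, dif_pos ⟨hj, hjn⟩]
  rcases eq_or_ne y ⟨j - 1, hj1⟩ with h1 | h1
  · rw [h1, Equiv.swap_apply_left]
    have : ((⟨j - 1, hj1⟩ : Fin n) : ℕ) = j - 1 := rfl
    simp [this]
  · rcases eq_or_ne y ⟨j, hjn⟩ with h2 | h2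
    · rw [h2, Equiv.swap_apply_right]
      have hne : (j : ℕ) ≠ j - 1 := by omega
      simp [hne]
    · rw [Equiv.swap_apply_of_ne_of_ne h1 h2]
      have e1 : (y : ℕ) ≠ j - 1 := fun h => h1 (by ext; exact h)
      have e2 : (y : ℕ) ≠ j := fun h => h2 (by ext; exact h)
      simp [e1, e2]

lemma posSet_mul_sw {n j a : ℕ} (hj : 0 < j) (hjn : j < n) (ha : a ≠ j)
    (σ : Equiv.Perm (Fin n)) : posSet (σ * sw n j) a = posSet σ a := by
  ext x
  rw [mem_posSet, mem_posSet, mul_sw_symm_apply, sw_val hj hjn]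
  split_ifs with h1 h2 <;> omega

lemma posSet_succ {n a : ℕ} (ha : a < n) (σ : Equiv.Perm (Fin n)) :
    posSet σ (a + 1) = insert (σ ⟨a, ha⟩) (posSet σ a) := by
  ext x
  rw [mem_posSet, Finset.mem_insert, mem_posSet]
  have hxy : x = σ ⟨a, ha⟩ ↔ σ.symm x = ⟨a, ha⟩ :=
    ⟨fun h => by rw [h]; simp, fun h => by rw [← Equiv.apply_symm_apply σ x, h]⟩
  rw [hxy]
  constructor
  · intro h
    rcases eq_or_ne ((σ.symm x : Fin n) : ℕ) a with h' | h'
    · exact Or.inl (by ext; exact h')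
    · exact Or.inr (by omega)
  · rintro (h | h)
    · rw [h]; simp
    · omega

lemma posSet_mul_sw_self {n j : ℕ} (hj : 0 < j) (hjn : j < n) (σ : Equiv.Perm (Fin n)) :
    posSet (σ * sw n j) j = insert (σ ⟨j, hjn⟩) (posSet σ (j - 1)) := by
  ext x
  rw [mem_posSet, Finset.mem_insert, mem_posSet, mul_sw_symm_apply]
  have hxy : x = σ ⟨j, hjn⟩ ↔ σ.symm x = ⟨j, hjn⟩ :=
    ⟨fun h => by rw [h]; simp, fun h => by rw [← Equiv.apply_symm_apply σ x, h]⟩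
  rw [hxy]
  have hval : σ.symm x = ⟨j, hjn⟩ ↔ ((σ.symm x : Fin n) : ℕ) = j :=
    ⟨fun h => by rw [h], fun h => by ext; exact h⟩
  rw [hval, sw_val hj hjn]
  split_ifs with h1 h2 <;> omega

lemma posSet_self_eq {n j : ℕ} (hj : 0 < j) (hjn : j < n) (σ : Equiv.Perm (Fin n)) :
    posSet σ j = insert (σ ⟨j - 1, lt_of_le_of_lt (Nat.sub_le j 1) hjn⟩) (posSet σ (j - 1)) := by
  have := posSet_succ (a := j - 1) (lt_of_le_of_lt (Nat.sub_le j 1) hjn) σ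
  rw [show j - 1 + 1 = j by omega] at this
  exact this

lemma posSet_ne_swap {n j : ℕ} (hj : 0 < j) (hjn : j < n) (σ : Equiv.Perm (Fin n)) :
    posSet σ j ≠ posSet (σ * sw n j) j := by
  intro h
  have h1 : σ ⟨j, hjn⟩ ∈ posSet (σ * sw n j) j := by
    rw [posSet_mul_sw_self hj hjn]; exact Finset.mem_insert_self _ _
  rw [← h, mem_posSet] at h1
  simp at h1

/-! ### The parametrization -/

def sig (n m : ℕ) (i : Fin m → ℕ) (b : Fin m → Bool) : ℕ → Equiv.Perm (Fin n)
  | 0 => 1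
  | k + 1 => sig n m i b k *
      (if h : k < m then (if b ⟨k, h⟩ then 1 else sw n (i ⟨k, h⟩)) else 1)

lemma sig_succ (n m : ℕ) (i : Fin m → ℕ) (b : Fin m → Bool) (k : Fin m) :
    sig n m i b ((k : ℕ) + 1) = sig n m i b k * (if b k then 1 else sw n (i k)) := by
  rw [sig, dif_pos k.isLt, Fin.eta]

def Phi (n m : ℕ) (i : Fin m → ℕ) (b : Fin m → Bool) :
    Fin (m + 1) → Fin (n + 1) → Submodule ℂ (Fin n → ℂ) :=
  fun k a => spanS n (posSet (sig n m i b (k : ℕ)) (a : ℕ))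

lemma hij0 {n m : ℕ} {i : Fin m → ℕ} (hi : ∀ t, 1 ≤ i t ∧ i t ≤ n - 1) (t : Fin m) :
    0 < i t := (hi t).1

lemma hijn {n m : ℕ} (hn : 2 ≤ n) {i : Fin m → ℕ} (hi : ∀ t, 1 ≤ i t ∧ i t ≤ n - 1)
    (t : Fin m) : i t < n := by have h1 := (hi t).2; omega

section Main

variable {n m : ℕ} (hn : 2 ≤ n) {i : Fin m → ℕ} (hi : ∀ t, 1 ≤ i t ∧ i t ≤ n - 1)

include hn hi

lemma Phi_mem (b : Fin m → Bool) :
    InBS n m i (Phi n m i b) ∧ ∀ k a, IsCoordSub n (Phi n m i b k a) := by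
  refine ⟨⟨?_, ?_, ?_⟩, ?_⟩
  · intro k
    constructor
    · intro a a' haa
      exact spanS_le_iff.2 (posSet_mono _ (by exact_mod_cast haa))
    · intro a
      rw [Phi, finrank_spanS, card_posSet _ (Nat.lt_succ_iff.mp a.isLt)]
  · funext a
    show spanS n (posSet (sig n m i b ((0 : Fin (m+1)) : ℕ)) (a : ℕ)) = stdFlag n a
    rw [Fin.val_zero]
    show spanS n (posSet (1 : Equiv.Perm (Fin n)) (a : ℕ)) = stdFlag n a
    rw [posSet_one, stdFlag, stdSub_eq_spanS]
  · intro k a ha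
    show spanS n (posSet (sig n m i b (k.succ : ℕ)) (a : ℕ))
      = spanS n (posSet (sig n m i b (k.castSucc : ℕ)) (a : ℕ))
    rw [Fin.val_succ, Fin.coe_castSucc, sig_succ]
    cases hb : b k
    · rw [if_neg (by simp), posSet_mul_sw (hij0 hi k) (hijn hn hi k) ha]
    · rw [if_pos rfl, mul_one]
  · intro k a
    exact ⟨↑(posSet (sig n m i b (k : ℕ)) (a : ℕ)), rfl⟩

lemma Phi_inj : Function.Injective (Phi n m i) := by
  intro b b' h
  have key : ∀ k, k ≤ m → sig n m i b k = sig n m i b' k ∧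
      ∀ t : Fin m, (t : ℕ) < k → b t = b' t := by
    intro k
    induction k with
    | zero => exact fun _ => ⟨rfl, fun t ht => absurd ht (by omega)⟩
    | succ k IH =>
      intro hk1
      obtain ⟨hσ, hb⟩ := IH (by omega)
      set t0 : Fin m := ⟨k, by omega⟩ with ht0
      have hbt : b t0 = b' t0 := by
        by_contra hne
        have hP := congrFun (congrFun h ⟨k + 1, by omega⟩)
          ⟨i t0, by have := hijn hn hi t0; omega⟩
        have hPS := spanS_injective hP
        have hv : ((⟨k + 1, by omega⟩ : Fin (m + 1)) : ℕ) = (t0 : ℕ) + 1 := rfl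
        rw [hv] at hPS
        rw [sig_succ, sig_succ, hσ] at hPS
        have hav : ((⟨i t0, by have := hijn hn hi t0; omega⟩ : Fin (n + 1)) : ℕ) = i t0 := rfl
        rw [hav] at hPS
        cases hb0 : b t0 <;> cases hb0' : b' t0
        · exact hne (by rw [hb0, hb0'])
        · rw [hb0, hb0'] at hPS
          rw [if_neg (by simp), if_pos rfl, mul_one] at hPS
          exact posSet_ne_swap (hij0 hi t0) (hijn hn hi t0) _ hPS.symm
        · rw [hb0, hb0'] at hPS
          rw [if_pos rfl, if_neg (by simp), mul_one] at hPS
          exact posSet_ne_swap (hij0 hi t0) (hijn hn hi t0) _ hPS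
        · exact hne (by rw [hb0, hb0'])
      constructor
      · rw [show k + 1 = (t0 : ℕ) + 1 from rfl, sig_succ, sig_succ, hσ, hbt]
      · intro t ht
        rcases eq_or_lt_of_le (Nat.lt_succ_iff.mp ht) with h' | h'
        · have : t = t0 := by ext; exact h'
          rw [this]; exact hbt
        · exact hb t h'
  funext t
  exact (key m le_rfl).2 t t.isLt

set_option maxHeartbeats 1600000 in
lemma Phi_surj (F : Fin (m + 1) → Fin (n + 1) → Submodule ℂ (Fin n → ℂ))
    (hF : InBS n m i F) (hC : ∀ k a, IsCoordSub n (F k a)) :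
    ∃ b : Fin m → Bool, Phi n m i b = F := by
  classical
  obtain ⟨hflag, h0, hstep⟩ := hF
  refine ⟨fun t => if (∀ c, F t.succ c = F t.castSucc c) then true else false, ?_⟩
  set b : Fin m → Bool :=
    fun t => if (∀ c, F t.succ c = F t.castSucc c) then true else false with hbdef
  clear_value b
  have key : ∀ k (hk : k ≤ m) (a : Fin (n + 1)),
      F ⟨k, by omega⟩ a = spanS n (posSet (sig n m i b k) (a : ℕ)) := by
    intro k
    induction k with
    | zero =>
      intro _ a
      have : (⟨0, by omega⟩ : Fin (m + 1)) = 0 := rfl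
      rw [this, h0]
      show stdSub n (a : ℕ) = spanS n (posSet (1 : Equiv.Perm (Fin n)) (a : ℕ))
      rw [posSet_one, stdSub_eq_spanS]
    | succ k IH =>
      intro hk1 a
      have hk : k ≤ m := by omega
      set t0 : Fin m := ⟨k, by omega⟩ with ht0
      set σ : Equiv.Perm (Fin n) := sig n m i b k with hσdef
      have IH' := IH hk
      have hsucc : (⟨k + 1, by omega⟩ : Fin (m + 1)) = t0.succ := rfl
      have hcast : (⟨k, by omega⟩ : Fin (m + 1)) = t0.castSucc := rfl
      have IH2 : ∀ c : Fin (n + 1), F t0.castSucc c = spanS n (posSet σ (c : ℕ)) :=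
        fun c => (congrFun (congrArg F hcast) c).symm.trans (IH' c)
      have hsig : sig n m i b (k + 1) = σ * (if b t0 then 1 else sw n (i t0)) := by
        rw [show k + 1 = (t0 : ℕ) + 1 from rfl, sig_succ]
      have hj0 := hij0 hi t0
      have hjn := hijn hn hi t0
      refine (congrFun (congrArg F hsucc) a).trans ?_
      rcases eq_or_ne ((a : ℕ)) (i t0) with haj | haj
      · -- the interesting position
        obtain ⟨jm, hjm⟩ : ∃ v : Fin (n + 1), (v : ℕ) = i t0 - 1 :=
          ⟨⟨i t0 - 1, by omega⟩, rfl⟩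
        obtain ⟨jp, hjp⟩ : ∃ v : Fin (n + 1), (v : ℕ) = i t0 + 1 :=
          ⟨⟨i t0 + 1, by omega⟩, rfl⟩
        have hWc : F t0.succ a = spanS n (Sfin n (F t0.succ a)) :=
          coord_spanS (hC t0.succ a)
        have hcardS : (Sfin n (F t0.succ a)).card = i t0 := by
          have h1 : Module.finrank ℂ (F t0.succ a) = (a : ℕ) := (hflag t0.succ).2 a
          rw [hWc, finrank_spanS, haj] at h1
          exact h1
        have hFm : F t0.succ jm = spanS n (posSet σ (i t0 - 1)) :=
          (hstep t0 jm (by rw [hjm]; omega)).trans ((IH2 jm).trans (by rw [hjm]))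
        have hFp : F t0.succ jp = spanS n (posSet σ (i t0 + 1)) :=
          (hstep t0 jp (by rw [hjp]; omega)).trans ((IH2 jp).trans (by rw [hjp]))
        have hmono1 : F t0.succ jm ≤ F t0.succ a :=
          (hflag t0.succ).1 (by rw [Fin.le_def, hjm, haj]; omega)
        have hmono2 : F t0.succ a ≤ F t0.succ jp :=
          (hflag t0.succ).1 (by rw [Fin.le_def, hjp, haj]; omega)
        rw [hFm, hWc] at hmono1
        rw [hWc, hFp] at hmono2
        have hlow : posSet σ (i t0 - 1) ⊆ Sfin n (F t0.succ a) := spanS_le_iff.1 hmono1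
        have hhigh : Sfin n (F t0.succ a) ⊆ posSet σ (i t0 + 1) := spanS_le_iff.1 hmono2
        obtain ⟨x, hxS, hxP⟩ : ∃ x ∈ Sfin n (F t0.succ a), x ∉ posSet σ (i t0 - 1) := by
          by_contra hcon
          push_neg at hcon
          have h2 := Finset.card_le_card (fun x hx => hcon x hx)
          rw [hcardS, card_posSet _ (show i t0 - 1 ≤ n by omega)] at h2
          omega
        have hSeq : Sfin n (F t0.succ a) = insert x (posSet σ (i t0 - 1)) := by
          apply Finset.eq_of_superset_of_card_ge
          · intro y hy
            rcases Finset.mem_insert.1 hy with rfl | hy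
            · exact hxS
            · exact hlow hy
          · rw [Finset.card_insert_of_notMem hxP, hcardS,
              card_posSet _ (show i t0 - 1 ≤ n by omega)]
            omega
        have hxcases : x = σ ⟨i t0, hjn⟩ ∨ x = σ ⟨i t0 - 1, by omega⟩ := by
          have h1 := hhigh hxS
          rw [posSet_succ hjn, posSet_self_eq hj0 hjn] at h1
          rcases Finset.mem_insert.1 h1 with h2 | h2
          · exact Or.inl h2
          · rcases Finset.mem_insert.1 h2 with h3 | h3
            · exact Or.inr (by rw [h3])
            · exact absurd h3 hxP
        have hFkj : F t0.castSucc a = spanS n (posSet σ (i t0)) :=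
          (IH2 a).trans (by rw [haj])
        rcases hxcases with hx | hx
        · -- swap case : b t0 = false
          have hSval : Sfin n (F t0.succ a) = posSet (σ * sw n (i t0)) (i t0) := by
            rw [hSeq, hx]
            exact (posSet_mul_sw_self hj0 hjn σ).symm
          have hWne : F t0.succ a ≠ F t0.castSucc a := by
            intro hcon
            rw [hWc, hSval, hFkj] at hcon
            exact posSet_ne_swap hj0 hjn σ (spanS_injective hcon).symm
          have hcond : ¬ ∀ c, F t0.succ c = F t0.castSucc c := fun hall => hWne (hall a)
          have hb0 : b t0 = false := by
            rw [hbdef]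
            exact if_neg hcond
          have e2 : spanS n (posSet (sig n m i b (k + 1)) ((a : ℕ)))
              = spanS n (posSet (σ * sw n (i t0)) (i t0)) := by
            rw [hsig, hb0, if_neg (by simp), haj]
          exact hWc.trans (by rw [hSval, ← e2])
        · -- keep case : b t0 = true
          have hSval : Sfin n (F t0.succ a) = posSet σ (i t0) := by
            rw [hSeq, hx]
            exact (posSet_self_eq hj0 hjn σ).symm
          have hWeq : F t0.succ a = F t0.castSucc a :=
            hWc.trans ((show spanS n (Sfin n (F t0.succ a)) = spanS n (posSet σ (i t0))
              by rw [hSval]).trans hFkj.symm)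
          have hcond : ∀ c, F t0.succ c = F t0.castSucc c := by
            intro c
            rcases eq_or_ne ((c : ℕ)) (i t0) with hc | hc
            · have hca : c = a := by ext; omega
              rw [hca]; exact hWeq
            · exact hstep t0 c hc
          have hb0 : b t0 = true := by
            rw [hbdef]
            exact if_pos hcond
          have e2 : spanS n (posSet (sig n m i b (k + 1)) ((a : ℕ)))
              = spanS n (posSet σ (i t0)) := by
            rw [hsig, hb0, if_pos rfl, mul_one, haj]
          exact hWc.trans (by rw [hSval, ← e2])
      · -- unchanged position
        refine (hstep t0 a haj).trans ((IH2 a).trans ?_)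
        rw [hsig]
        cases hb0 : b t0
        · rw [if_neg (by simp), posSet_mul_sw hj0 hjn haj]
        · rw [if_pos rfl, mul_one]
  funext k a
  have hthis := key (k : ℕ) (Nat.lt_succ_iff.mp k.isLt) a
  rw [Fin.eta] at hthis
  exact hthis.symm

end Main

end Stmt3Aux

open Stmt3Aux in
/-- the set of points of `BS^i` all of whose subspaces are coordinate
subspaces is finite, of cardinality `2^m`. -/
theorem stmt3 (n m : ℕ) (hn : 2 ≤ n) (i : Fin m → ℕ)
    (hi : ∀ t, 1 ≤ i t ∧ i t ≤ n - 1) :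
    {F : Fin (m + 1) → Fin (n + 1) → Submodule ℂ (Fin n → ℂ) |
        InBS n m i F ∧ ∀ k a, IsCoordSub n (F k a)}.Finite ∧
      {F : Fin (m + 1) → Fin (n + 1) → Submodule ℂ (Fin n → ℂ) |
        InBS n m i F ∧ ∀ k a, IsCoordSub n (F k a)}.ncard = 2 ^ m := by
  have hset : {F : Fin (m + 1) → Fin (n + 1) → Submodule ℂ (Fin n → ℂ) |
      InBS n m i F ∧ ∀ k a, IsCoordSub n (F k a)} = Set.range (Phi n m i) := by
    ext F
    constructor
    · rintro ⟨h1, h2⟩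
      obtain ⟨b, hb⟩ := Phi_surj hn hi F h1 h2
      exact ⟨b, hb⟩
    · rintro ⟨b, rfl⟩
      exact Phi_mem hn hi b
  constructor
  · rw [hset]; exact Set.finite_range _
  · rw [hset, ← Set.image_univ, Set.ncard_image_of_injective _ (Phi_inj hn hi),
      Set.ncard_univ, Nat.card_eq_fintype_card]
    simp
end
end

section
/- Let i = (i_1, …, i_m) be a word with m ≥ 1, and let (F^0, …, F^{m−1}) be an element of BS^{(i_1, …, i_{m−1})}. Then the quotient space F^{m−1}(i_m + 1) / F^{m−1}(i_m − 1) is a 2-dimensional ℂ-vector space, and the map sending a complete flag F^m with (F^0, …, F^m) ∈ BS^i to the image of F^m(i_m) in this quotient is a bijection from the set of all such flags F^m onto the set of 1-dimensional subspaces of F^{m−1}(i_m + 1) / F^{m−1}(i_m − 1). (Thus the map BS^i → BS^{(i_1,…,i_{m−1})} forgetting the last flag has all fibers in bijection with ℂℙ¹, realizing BS^i as an iterated ℂℙ¹-bundle.) -/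
noncomputable section

/-- Rank formula for the image of a submodule under a quotient map. -/
lemma finrank_map_mkQ_add {M : Type*} [AddCommGroup M] [Module ℂ M] [FiniteDimensional ℂ M]
    (A S : Submodule ℂ M) (h : A ≤ S) :
    Module.finrank ℂ (S.map A.mkQ) + Module.finrank ℂ A = Module.finrank ℂ S := by
  have h1 : S.map A.mkQ = LinearMap.range (A.mkQ.comp S.subtype) := by
    rw [LinearMap.range_comp, Submodule.range_subtype]
  have h2 : LinearMap.ker (A.mkQ.comp S.subtype) = A.comap S.subtype := by
    rw [LinearMap.ker_comp, Submodule.ker_mkQ]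
  have h3 := LinearMap.finrank_range_add_finrank_ker (A.mkQ.comp S.subtype)
  rw [h2] at h3
  rw [h1]
  rw [(Submodule.comapSubtypeEquivOfLe h).finrank_eq] at h3
  exact h3

lemma map_mkQ_inj {M : Type*} [AddCommGroup M] [Module ℂ M]
    (A S T : Submodule ℂ M) (hS : A ≤ S) (hT : A ≤ T)
    (h : S.map A.mkQ = T.map A.mkQ) : S = T := by
  have h2 := congrArg (Submodule.comap A.mkQ) h
  rwa [Submodule.comap_map_eq, Submodule.comap_map_eq, Submodule.ker_mkQ,
    sup_eq_left.mpr hS, sup_eq_left.mpr hT] at h2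

set_option maxHeartbeats 1000000
set_option synthInstance.maxHeartbeats 400000

/-- let `i = (i_1, …, i_{m+1})` be a word and `(F^0, …, F^m)` an element of
`BS^{(i_1, …, i_m)}`.  Then `F^m(i_{m+1} + 1) / F^m(i_{m+1} - 1)` is 2-dimensional, and
the map sending a complete flag `G` with `(F^0, …, F^m, G) ∈ BS^i` to the image of
`G(i_{m+1})` in this quotient is a bijection onto the set of 1-dimensional subspaces of
the quotient.  (Here the last letter of the word is `i (Fin.last m)`.) -/
theorem stmt4 (n m : ℕ) (hn : 2 ≤ n) (i : Fin (m + 1) → ℕ)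
    (hi : ∀ t, 1 ≤ i t ∧ i t ≤ n - 1)
    (F : Fin (m + 1) → Fin (n + 1) → Submodule ℂ (Fin n → ℂ))
    (hF : InBS n m (fun t : Fin m => i t.castSucc) F) :
    let B : Submodule ℂ (Fin n → ℂ) :=
      F (Fin.last m) ⟨i (Fin.last m) + 1, by have := (hi (Fin.last m)).2; omega⟩
    let A' : Submodule ℂ ↥B :=
      (F (Fin.last m)
          ⟨i (Fin.last m) - 1, by have := (hi (Fin.last m)).2; omega⟩).comap B.subtype
    Module.finrank ℂ (↥B ⧸ A') = 2 ∧
      Set.BijOn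
        (fun G : Fin (n + 1) → Submodule ℂ (Fin n → ℂ) =>
          Submodule.map A'.mkQ
            ((G ⟨i (Fin.last m), by have := (hi (Fin.last m)).2; omega⟩).comap B.subtype))
        {G | InBS n (m + 1) i (Fin.snoc F G)}
        {W : Submodule ℂ (↥B ⧸ A') | Module.finrank ℂ W = 1} := by
  intro B A'
  obtain ⟨hflags, hstd, hcomp⟩ := hF
  have hr1 : 1 ≤ i (Fin.last m) := (hi (Fin.last m)).1
  have hr2 : i (Fin.last m) ≤ n - 1 := (hi (Fin.last m)).2
  have hrm : i (Fin.last m) - 1 < n + 1 := by omega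
  have hrr : i (Fin.last m) < n + 1 := by omega
  have hrp : i (Fin.last m) + 1 < n + 1 := by omega
  set Fm := F (Fin.last m) with hFmdef
  set rm : Fin (n + 1) := ⟨i (Fin.last m) - 1, hrm⟩ with hrmdef
  set rr : Fin (n + 1) := ⟨i (Fin.last m), hrr⟩ with hrrdef
  set rp : Fin (n + 1) := ⟨i (Fin.last m) + 1, hrp⟩ with hrpdef
  have hFmMono : Monotone Fm := (hflags (Fin.last m)).1
  have hFmRank : ∀ k, Module.finrank ℂ (Fm k) = (k : ℕ) := (hflags (Fin.last m)).2
  have hB : B = Fm rp := rfl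
  have hA' : A' = (Fm rm).comap B.subtype := rfl
  have hAB : Fm rm ≤ B := hFmMono (Fin.mk_le_mk.mpr (by omega))
  have hA'rank : Module.finrank ℂ A' = i (Fin.last m) - 1 := by
    have h : Module.finrank ℂ ((Fm rm).comap B.subtype) = Module.finrank ℂ (Fm rm) :=
      (Submodule.comapSubtypeEquivOfLe hAB).finrank_eq
    rw [hFmRank rm] at h
    exact h
  have hBrank : Module.finrank ℂ B = i (Fin.last m) + 1 := hFmRank rp
  have hquot : Module.finrank ℂ (↥B ⧸ A') = 2 := by
    have h := Submodule.finrank_quotient_add_finrank A'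
    omega
  -- shared facts about members of the fiber
  have hGfacts : ∀ G, InBS n (m + 1) i (Fin.snoc F G) →
      (∀ a : Fin (n + 1), (a : ℕ) ≠ i (Fin.last m) → G a = Fm a) ∧ G rr ≤ B ∧
        A' ≤ (G rr).comap B.subtype ∧
        Module.finrank ℂ ((G rr).comap B.subtype) = i (Fin.last m) := by
    intro G hG
    obtain ⟨hGflags, -, hGcomp⟩ := hG
    have hGflag : IsCompleteFlag n G := by
      have h := hGflags (Fin.last (m + 1))
      rwa [Fin.snoc_last] at h
    have heq : ∀ a : Fin (n + 1), (a : ℕ) ≠ i (Fin.last m) → G a = Fm a := by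
      intro a ha
      have h := hGcomp (Fin.last m) a ha
      rwa [Fin.succ_last, Fin.snoc_last, Fin.snoc_castSucc] at h
    have hGrm : G rm = Fm rm := heq rm (by simp [hrmdef]; omega)
    have hGrp : G rp = Fm rp := heq rp (by simp [hrpdef])
    have hGB : G rr ≤ B := by
      rw [hB, ← hGrp]
      exact hGflag.1 (Fin.mk_le_mk.mpr (by omega))
    have hA'le : A' ≤ (G rr).comap B.subtype := by
      rw [hA']
      refine Submodule.comap_mono ?_
      rw [← hGrm]
      exact hGflag.1 (Fin.mk_le_mk.mpr (by omega))
    have hSrank : Module.finrank ℂ ((G rr).comap B.subtype) = i (Fin.last m) := by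
      rw [(Submodule.comapSubtypeEquivOfLe hGB).finrank_eq]
      exact hGflag.2 rr
    exact ⟨heq, hGB, hA'le, hSrank⟩
  refine ⟨hquot, ?_, ?_, ?_⟩
  · -- MapsTo
    intro G hG
    obtain ⟨heq, hGB, hA'le, hSrank⟩ := hGfacts G hG
    show Module.finrank ℂ ((((G rr).comap B.subtype)).map A'.mkQ) = 1
    have h := finrank_map_mkQ_add A' ((G rr).comap B.subtype) hA'le
    omega
  · -- InjOn
    intro G1 h1 G2 h2 heq12
    obtain ⟨heq1, hGB1, hA'le1, -⟩ := hGfacts G1 h1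
    obtain ⟨heq2, hGB2, hA'le2, -⟩ := hGfacts G2 h2
    have heq12' : ((G1 rr).comap B.subtype).map A'.mkQ = ((G2 rr).comap B.subtype).map A'.mkQ :=
      heq12
    have hS : (G1 rr).comap B.subtype = (G2 rr).comap B.subtype :=
      map_mkQ_inj A' _ _ hA'le1 hA'le2 heq12'
    have hGr : G1 rr = G2 rr := by
      have h := congrArg (Submodule.map B.subtype) hS
      rwa [Submodule.map_comap_subtype, Submodule.map_comap_subtype,
        inf_eq_right.mpr hGB1, inf_eq_right.mpr hGB2] at h
    funext a
    by_cases ha : (a : ℕ) = i (Fin.last m)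
    · have haeq : a = rr := Fin.ext ha
      rw [haeq]; exact hGr
    · rw [heq1 a ha, heq2 a ha]
  · -- SurjOn
    intro W hW
    have hWrank : Module.finrank ℂ W = 1 := hW
    set P := W.comap A'.mkQ with hPdef
    set C := P.map B.subtype with hCdef
    have hA'P : A' ≤ P := by
      intro x hx
      show A'.mkQ x ∈ W
      have hz : A'.mkQ x = 0 := (Submodule.Quotient.mk_eq_zero A').mpr hx
      rw [hz]; exact W.zero_mem
    have hmapP : P.map A'.mkQ = W :=
      Submodule.map_comap_eq_of_surjective (Submodule.mkQ_surjective A') W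
    have hPrank : Module.finrank ℂ P = i (Fin.last m) := by
      have h := finrank_map_mkQ_add A' P hA'P
      rw [hmapP] at h
      omega
    have hCB : C ≤ B := Submodule.map_subtype_le B P
    have hCrank : Module.finrank ℂ C = i (Fin.last m) := by
      rw [hCdef, Submodule.finrank_map_subtype_eq]
      exact hPrank
    have hAC : Fm rm ≤ C := by
      have hFA : Fm rm = A'.map B.subtype := by
        rw [hA', Submodule.map_comap_subtype, inf_eq_right.mpr hAB]
      rw [hFA]
      exact Submodule.map_mono hA'P
    set G := Function.update Fm rr C with hGdef
    have hGrr : G rr = C := Function.update_self rr C Fm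
    have hGne : ∀ a, a ≠ rr → G a = Fm a := fun a ha => Function.update_of_ne ha C Fm
    have hCBle : C ≤ Fm rp := by rw [← hB]; exact hCB
    have hGflag : IsCompleteFlag n G := by
      constructor
      · intro a b hab
        rcases eq_or_ne a rr with ha | ha <;> rcases eq_or_ne b rr with hb | hb
        · rw [ha, hb]
        · have hbge : rp ≤ b := by
            have hlt : a < b := lt_of_le_of_ne hab (fun h => hb (h ▸ ha))
            rw [ha, Fin.lt_def] at hlt
            rw [Fin.le_def]
            simpa [hrpdef, hrrdef] using hlt
          rw [ha, hGrr, hGne b hb]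
          exact le_trans hCBle (hFmMono hbge)
        · have hale : a ≤ rm := by
            have hlt : a < rr := lt_of_le_of_ne (hb ▸ hab) ha
            rw [Fin.lt_def] at hlt
            rw [Fin.le_def]
            simp only [hrmdef, hrrdef] at hlt ⊢
            omega
          rw [hb, hGrr, hGne a ha]
          exact le_trans (hFmMono hale) hAC
        · rw [hGne a ha, hGne b hb]
          exact hFmMono hab
      · intro k
        rcases eq_or_ne k rr with hk | hk
        · rw [hk, hGrr]
          exact hCrank
        · rw [hGne k hk]
          exact hFmRank k
    have hInBS : InBS n (m + 1) i (Fin.snoc F G) := by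
      refine ⟨?_, ?_, ?_⟩
      · intro k
        induction k using Fin.lastCases with
        | last => rw [Fin.snoc_last]; exact hGflag
        | cast j => rw [Fin.snoc_castSucc]; exact hflags j
      · have h0 : (0 : Fin (m + 2)) = Fin.castSucc 0 := rfl
        rw [h0, Fin.snoc_castSucc]
        exact hstd
      · intro k
        induction k using Fin.lastCases with
        | last =>
          intro a ha
          rw [Fin.succ_last, Fin.snoc_last, Fin.snoc_castSucc]
          exact hGne a (fun h => ha (by rw [h]))
        | cast j =>
          intro a ha
          rw [Fin.succ_castSucc, Fin.snoc_castSucc, Fin.snoc_castSucc]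
          exact hcomp j a ha
    refine ⟨G, hInBS, ?_⟩
    show ((G rr).comap B.subtype).map A'.mkQ = W
    rw [hGrr]
    have hcm : C.comap B.subtype = P := by
      rw [hCdef, Submodule.comap_map_eq, Submodule.ker_subtype, sup_bot_eq]
    rw [hcm, hmapP]
end
end

section
/- Fix a with 1 ≤ a ≤ n − 2, and let F and G be complete flags in V = ℂⁿ with F(b) = G(b) for every b ∉ {a, a+1}. Then there exist complete flags X and Y such that X(b) = F(b) for all b ≠ a, Y(b) = X(b) for all b ≠ a+1, and G(b) = Y(b) for all b ≠ a. (That is, G can be reached from F by a chain of single-position modifications following the word (a, a+1, a); geometrically, the projection f_T from the Bott–Samelson variety of a rhombic tiling T to the hexagon-tile variety Z_{T_H} is surjective.) -/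
noncomputable section

open Module Submodule


/-- Updating a complete flag at one interior position with a suitable subspace
gives a complete flag. -/
lemma flag_update {n a : ℕ} (ha1 : 1 ≤ a) (ha2 : a + 1 ≤ n)
    (F : Fin (n + 1) → Submodule ℂ (Fin n → ℂ)) (hF : IsCompleteFlag n F)
    (W : Submodule ℂ (Fin n → ℂ))
    (hW1 : F ⟨a - 1, by omega⟩ ≤ W) (hW2 : W ≤ F ⟨a + 1, by omega⟩)
    (hWr : finrank ℂ W = a) :
    IsCompleteFlag n (fun b => if (b : ℕ) = a then W else F b) := by
  constructor
  · intro k l hkl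
    simp only
    rcases eq_or_ne (k : ℕ) a with hk | hk <;> rcases eq_or_ne (l : ℕ) a with hl | hl
    · simp [hk, hl]
    · have hkl' : (k : ℕ) ≤ (l : ℕ) := hkl
      have : a + 1 ≤ (l : ℕ) := by omega
      simp only [hk, if_pos rfl, if_neg hl]
      exact hW2.trans (hF.1 (show (⟨a + 1, by omega⟩ : Fin (n + 1)) ≤ l from this))
    · have hkl' : (k : ℕ) ≤ (l : ℕ) := hkl
      have : (k : ℕ) ≤ a - 1 := by omega
      simp only [if_neg hk, hl, if_pos rfl]
      exact (hF.1 (show k ≤ (⟨a - 1, by omega⟩ : Fin (n + 1)) from this)).trans hW1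
    · simpa [hk, hl] using hF.1 hkl
  · intro k
    rcases eq_or_ne (k : ℕ) a with hk | hk
    · show finrank ℂ ↥(if (k:ℕ) = a then W else F k) = (k:ℕ)
      rw [if_pos hk, hk]; exact hWr
    · show finrank ℂ ↥(if (k:ℕ) = a then W else F k) = (k:ℕ)
      rw [if_neg hk]; exact hF.2 k

/-- if complete flags `F`, `G` agree except possibly in positions `a`, `a+1`
(with `1 ≤ a ≤ n-2`), then `G` can be reached from `F` by a chain of single-position
modifications following the word `(a, a+1, a)`. -/
theorem stmt5 (n : ℕ) (hn : 2 ≤ n) (a : ℕ) (ha1 : 1 ≤ a) (ha2 : a ≤ n - 2)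
    (F G : Fin (n + 1) → Submodule ℂ (Fin n → ℂ))
    (hF : IsCompleteFlag n F) (hG : IsCompleteFlag n G)
    (hFG : ∀ b : Fin (n + 1), (b : ℕ) ≠ a → (b : ℕ) ≠ a + 1 → F b = G b) :
    ∃ X Y : Fin (n + 1) → Submodule ℂ (Fin n → ℂ),
      IsCompleteFlag n X ∧ IsCompleteFlag n Y ∧
      (∀ b : Fin (n + 1), (b : ℕ) ≠ a → X b = F b) ∧
      (∀ b : Fin (n + 1), (b : ℕ) ≠ a + 1 → Y b = X b) ∧
      (∀ b : Fin (n + 1), (b : ℕ) ≠ a → G b = Y b) := by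
  have ha2' : a + 2 ≤ n := by omega
  set i0 : Fin (n + 1) := ⟨a - 1, by omega⟩
  set i1 : Fin (n + 1) := ⟨a + 1, by omega⟩
  set i2 : Fin (n + 1) := ⟨a + 2, by omega⟩
  -- the intersection I = F(a+1) ⊓ G(a+1) has dimension ≥ a
  have hFG2 : F i2 = G i2 := hFG i2 (by show a + 2 ≠ a; omega) (by show a + 2 ≠ a + 1; omega)
  have hsup : F i1 ⊔ G i1 ≤ F i2 := by
    refine sup_le (hF.1 ?_) (hFG2 ▸ hG.1 ?_) <;> exact (by show a + 1 ≤ a + 2; omega)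
  have hdimI : a ≤ finrank ℂ ↑(F i1 ⊓ G i1) := by
    have h1 := Submodule.finrank_sup_add_finrank_inf_eq (F i1) (G i1)
    have h2 : finrank ℂ ↑(F i1 ⊔ G i1) ≤ a + 2 := by
      calc finrank ℂ ↑(F i1 ⊔ G i1) ≤ finrank ℂ (F i2) := Submodule.finrank_mono hsup
        _ = a + 2 := hF.2 i2
    have hv1 : (i1 : ℕ) = a + 1 := rfl
    rw [hF.2 i1, hG.2 i1, hv1] at h1
    omega
  -- F(a-1) = G(a-1) sits inside I
  have hFG0 : F i0 = G i0 := hFG i0 (by show a - 1 ≠ a; omega) (by show a - 1 ≠ a + 1; omega)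
  have h0F : F i0 ≤ F i1 := hF.1 (by show a - 1 ≤ a + 1; omega)
  have h0G : F i0 ≤ G i1 := hFG0 ▸ hG.1 (by show a - 1 ≤ a + 1; omega)
  have h0I : F i0 ≤ F i1 ⊓ G i1 := le_inf h0F h0G
  -- pick v in I not in F(a-1)
  have hlt : finrank ℂ (F i0) < finrank ℂ ↑(F i1 ⊓ G i1) := by
    rw [hF.2 i0]; show a - 1 < _; omega
  obtain ⟨v, hvI, hvn⟩ : ∃ v ∈ F i1 ⊓ G i1, v ∉ F i0 := by
    by_contra h
    push_neg at h
    exact absurd (Submodule.finrank_mono fun x hx => h x hx) (not_le.mpr hlt)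
  set W : Submodule ℂ (Fin n → ℂ) := F i0 ⊔ ℂ ∙ v
  have hWI : W ≤ F i1 ⊓ G i1 := sup_le h0I ((Submodule.span_singleton_le_iff_mem v _).mpr hvI)
  have hW0 : F i0 ≤ W := le_sup_left
  have hv0 : v ≠ 0 := fun h => hvn (h ▸ (F i0).zero_mem)
  have hWr : finrank ℂ W = a := by
    have hd : Disjoint (F i0) (ℂ ∙ v) :=
      (Submodule.disjoint_span_singleton' hv0).mpr hvn
    have := Submodule.finrank_sup_add_finrank_inf_eq (F i0) (ℂ ∙ v)
    have hv00 : (i0 : ℕ) = a - 1 := rfl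
    rw [hd.eq_bot, finrank_bot, finrank_span_singleton hv0, hF.2 i0, hv00] at this
    show finrank ℂ ↑(F i0 ⊔ ℂ ∙ v) = a
    omega
  refine ⟨fun b => if (b : ℕ) = a then W else F b,
          fun b => if (b : ℕ) = a then W else G b, ?_, ?_, ?_, ?_, ?_⟩
  · exact flag_update ha1 (by omega) F hF W hW0 (hWI.trans inf_le_left)
      hWr
  · exact flag_update ha1 (by omega) G hG W (hFG0 ▸ hW0) (hWI.trans inf_le_right) hWr
  · intro b hb; simp [hb]
  · intro b hb
    rcases eq_or_ne (b : ℕ) a with h | h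
    · simp [h]
    · simp [h, hFG b h hb]
  · intro b hb; simp [hb]
end
end

section
/- Fix a with 1 ≤ a ≤ n − 2, and let F and G be complete flags in V = ℂⁿ with F(b) = G(b) for every b ∉ {a, a+1}. Then there exist complete flags X and Y such that X(b) = F(b) for all b ≠ a+1, Y(b) = X(b) for all b ≠ a, and G(b) = Y(b) for all b ≠ a+1. (That is, G can be reached from F by a chain of single-position modifications following the word (a+1, a, a+1); geometrically, the projection f_{T'} from the Bott–Samelson variety of the flipped rhombic tiling T' to the hexagon-tile variety Z_{T_H} is surjective.) -/
noncomputable section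

open Module Submodule

lemma finrank_sup_single' {V : Type*} [AddCommGroup V] [Module ℂ V]
    (W : Submodule ℂ V) [FiniteDimensional ℂ W] {v : V} (hv : v ∉ W) :
    finrank ℂ ↥(W ⊔ (ℂ ∙ v)) = finrank ℂ ↥W + 1 := by
  have hv0 : v ≠ 0 := fun h => hv (h ▸ W.zero_mem)
  have hdisj : W ⊓ (ℂ ∙ v) = ⊥ := by
    rw [eq_bot_iff]
    rintro x ⟨hxW, hxv⟩
    rcases mem_span_singleton.1 hxv with ⟨c, rfl⟩
    rcases eq_or_ne c 0 with rfl | hc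
    · simp
    · exfalso; apply hv
      have h2 : c⁻¹ • (c • v) ∈ W := W.smul_mem _ hxW
      rwa [inv_smul_smul₀ hc] at h2
  have h := Submodule.finrank_sup_add_finrank_inf_eq W (ℂ ∙ v)
  rw [hdisj, finrank_bot, add_zero, finrank_span_singleton hv0] at h
  exact h

lemma exists_between_finrank' {V : Type*} [AddCommGroup V] [Module ℂ V]
    (T : Submodule ℂ V) [FiniteDimensional ℂ T] :
    ∀ d : ℕ, ∀ S : Submodule ℂ V, S ≤ T → finrank ℂ ↥S ≤ d → d ≤ finrank ℂ ↥T →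
    ∃ W : Submodule ℂ V, S ≤ W ∧ W ≤ T ∧ finrank ℂ ↥W = d := by
  intro d
  induction d with
  | zero => intro S hST h0 _; exact ⟨S, le_rfl, hST, le_antisymm h0 (Nat.zero_le _)⟩
  | succ d ih =>
    intro S hST hSd hdT
    rcases Nat.lt_or_ge (finrank ℂ ↥S) (d + 1) with h | h
    · have hSd' : finrank ℂ ↥S ≤ d := Nat.lt_succ_iff.1 h
      obtain ⟨W, hSW, hWT, hWd⟩ := ih S hST hSd' (Nat.le_of_succ_le hdT)
      haveI : FiniteDimensional ℂ W := Submodule.finiteDimensional_of_le hWT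
      have hlt : W < T := by
        rcases lt_or_eq_of_le hWT with h' | rfl
        · exact h'
        · omega
      obtain ⟨v, hvT, hvW⟩ := SetLike.exists_of_lt hlt
      refine ⟨W ⊔ (ℂ ∙ v), le_trans hSW le_sup_left, sup_le hWT ?_, ?_⟩
      · exact (span_singleton_le_iff_mem v T).2 hvT
      · rw [finrank_sup_single' W hvW, hWd]
    · exact ⟨S, le_rfl, hST, le_antisymm hSd h⟩

/-- The core construction, stated with unfolded flag conditions. -/
lemma stmt6_core (n : ℕ) (a : ℕ) (ha1 : 1 ≤ a) (han : a + 2 ≤ n)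
    (F G : Fin (n + 1) → Submodule ℂ (Fin n → ℂ))
    (hFm : Monotone F) (hFd : ∀ k : Fin (n + 1), Module.finrank ℂ (F k) = (k : ℕ))
    (hGm : Monotone G) (hGd : ∀ k : Fin (n + 1), Module.finrank ℂ (G k) = (k : ℕ))
    (hFG : ∀ b : Fin (n + 1), (b : ℕ) ≠ a → (b : ℕ) ≠ a + 1 → F b = G b) :
    ∃ X Y : Fin (n + 1) → Submodule ℂ (Fin n → ℂ),
      (Monotone X ∧ ∀ k : Fin (n + 1), Module.finrank ℂ (X k) = (k : ℕ)) ∧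
      (Monotone Y ∧ ∀ k : Fin (n + 1), Module.finrank ℂ (Y k) = (k : ℕ)) ∧
      (∀ b : Fin (n + 1), (b : ℕ) ≠ a + 1 → X b = F b) ∧
      (∀ b : Fin (n + 1), (b : ℕ) ≠ a → Y b = X b) ∧
      (∀ b : Fin (n + 1), (b : ℕ) ≠ a + 1 → G b = Y b) := by
  set ia : Fin (n + 1) := ⟨a, by omega⟩ with hia
  set ia1 : Fin (n + 1) := ⟨a + 1, by omega⟩ with hia1
  set ia2 : Fin (n + 1) := ⟨a + 2, by omega⟩ with hia2
  set iam : Fin (n + 1) := ⟨a - 1, by omega⟩ with hiam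
  have via_ : (ia : ℕ) = a := rfl
  have via1 : (ia1 : ℕ) = a + 1 := rfl
  have via2 : (ia2 : ℕ) = a + 2 := rfl
  have viam : (iam : ℕ) = a - 1 := rfl
  have hFGm : F iam = G iam := hFG iam (by rw [viam]; omega) (by rw [viam]; omega)
  have hFG2 : F ia2 = G ia2 := hFG ia2 (by rw [via2]; omega) (by rw [via2]; omega)
  have hGa2 : G ia ≤ F ia2 := hFG2 ▸ hGm (by rw [Fin.le_def, via_, via2]; omega)
  have hFa2 : F ia ≤ F ia2 := hFm (by rw [Fin.le_def, via_, via2]; omega)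
  have hinf : a - 1 ≤ Module.finrank ℂ ↥(F ia ⊓ G ia) := by
    have h1 : F iam ≤ F ia ⊓ G ia :=
      le_inf (hFm (by rw [Fin.le_def, viam, via_]; omega))
        (hFGm ▸ hGm (by rw [Fin.le_def, viam, via_]; omega))
    have h2 := Submodule.finrank_mono h1
    rw [hFd iam, viam] at h2
    exact h2
  have hsup : Module.finrank ℂ ↥(F ia ⊔ G ia) ≤ a + 1 := by
    have h := Submodule.finrank_sup_add_finrank_inf_eq (F ia) (G ia)
    rw [hFd ia, hGd ia, via_] at h
    omega
  obtain ⟨W, hWl, hWr, hWd⟩ := exists_between_finrank' (F ia2) (a + 1) (F ia ⊔ G ia)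
    (sup_le hFa2 hGa2) hsup (by rw [hFd ia2, via2]; omega)
  refine ⟨fun b => if (b : ℕ) = a + 1 then W else F b,
          fun b => if (b : ℕ) = a then G ia else if (b : ℕ) = a + 1 then W else F b,
          ⟨?_, ?_⟩, ⟨?_, ?_⟩, ?_, ?_, ?_⟩
  · -- X monotone
    intro b c hbc
    have hbc' : (b : ℕ) ≤ (c : ℕ) := hbc
    beta_reduce
    by_cases hb : (b : ℕ) = a + 1 <;> by_cases hc : (c : ℕ) = a + 1
    · rw [if_pos hb, if_pos hc]
    · rw [if_pos hb, if_neg hc]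
      exact hWr.trans (hFm (show ia2 ≤ c by rw [Fin.le_def, via2]; omega))
    · rw [if_neg hb, if_pos hc]
      exact (hFm (show b ≤ ia by rw [Fin.le_def, via_]; omega)).trans
        (le_sup_left.trans hWl)
    · rw [if_neg hb, if_neg hc]; exact hFm hbc
  · -- X dims
    intro k
    beta_reduce
    by_cases h : (k : ℕ) = a + 1
    · rw [if_pos h, hWd, h]
    · rw [if_neg h]; exact hFd k
  · -- Y monotone
    intro b c hbc
    have hbc' : (b : ℕ) ≤ (c : ℕ) := hbc
    beta_reduce
    by_cases hb : (b : ℕ) = a <;> by_cases hc : (c : ℕ) = a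
    · rw [if_pos hb, if_pos hc]
    · rw [if_pos hb, if_neg hc]
      by_cases hc1 : (c : ℕ) = a + 1
      · rw [if_pos hc1]; exact le_sup_right.trans hWl
      · rw [if_neg hc1]
        exact hGa2.trans (hFm (show ia2 ≤ c by rw [Fin.le_def, via2]; omega))
    · rw [if_neg hb, if_pos hc]
      have hb1 : ¬ (b : ℕ) = a + 1 := by omega
      rw [if_neg hb1]
      calc F b ≤ F iam := hFm (by rw [Fin.le_def, viam]; omega)
        _ = G iam := hFGm
        _ ≤ G ia := hGm (by rw [Fin.le_def, viam, via_]; omega)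
    · rw [if_neg hb, if_neg hc]
      by_cases hb1 : (b : ℕ) = a + 1 <;> by_cases hc1 : (c : ℕ) = a + 1
      · rw [if_pos hb1, if_pos hc1]
      · rw [if_pos hb1, if_neg hc1]
        exact hWr.trans (hFm (show ia2 ≤ c by rw [Fin.le_def, via2]; omega))
      · rw [if_neg hb1, if_pos hc1]
        exact (hFm (show b ≤ ia by rw [Fin.le_def, via_]; omega)).trans
          (le_sup_left.trans hWl)
      · rw [if_neg hb1, if_neg hc1]; exact hFm hbc
  · -- Y dims
    intro k
    beta_reduce
    by_cases h1 : (k : ℕ) = a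
    · rw [if_pos h1, hGd ia, via_, h1]
    · rw [if_neg h1]
      by_cases h2 : (k : ℕ) = a + 1
      · rw [if_pos h2, hWd, h2]
      · rw [if_neg h2]; exact hFd k
  · intro b hb; beta_reduce; rw [if_neg hb]
  · intro b hb; beta_reduce; rw [if_neg hb]
  · intro b hb
    beta_reduce
    by_cases h : (b : ℕ) = a
    · rw [if_pos h]
      congr 1
      exact Fin.ext h
    · rw [if_neg h, if_neg hb]
      exact (hFG b h hb).symm


/-- if complete flags `F`, `G` agree except possibly in positions `a`, `a+1`
(with `1 ≤ a ≤ n-2`), then `G` can be reached from `F` by a chain of single-position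
modifications following the word `(a+1, a, a+1)`. -/
theorem stmt6 (n : ℕ) (hn : 2 ≤ n) (a : ℕ) (ha1 : 1 ≤ a) (ha2 : a ≤ n - 2)
    (F G : Fin (n + 1) → Submodule ℂ (Fin n → ℂ))
    (hF : IsCompleteFlag n F) (hG : IsCompleteFlag n G)
    (hFG : ∀ b : Fin (n + 1), (b : ℕ) ≠ a → (b : ℕ) ≠ a + 1 → F b = G b) :
    ∃ X Y : Fin (n + 1) → Submodule ℂ (Fin n → ℂ),
      IsCompleteFlag n X ∧ IsCompleteFlag n Y ∧
      (∀ b : Fin (n + 1), (b : ℕ) ≠ a + 1 → X b = F b) ∧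
      (∀ b : Fin (n + 1), (b : ℕ) ≠ a → Y b = X b) ∧
      (∀ b : Fin (n + 1), (b : ℕ) ≠ a + 1 → G b = Y b) := by
  obtain ⟨X, Y, hX, hY, h1, h2, h3⟩ :=
    stmt6_core n a ha1 (by omega) F G hF.1 hF.2 hG.1 hG.2 hFG
  exact ⟨X, Y, hX, hY, h1, h2, h3⟩
end
end

section
/- Fix integers a ≥ 0 and j ≥ 2 with a + j ≤ n. Let r ∈ S_n be the permutation that reverses the interval {a+1, …, a+j} (i.e., r(a + t) = a + j + 1 − t for 1 ≤ t ≤ j) and fixes all other points, and let (c_1, …, c_M) be any reduced word for r (so M = j(j−1)/2, and each c_t satisfies a+1 ≤ c_t ≤ a+j−1). Let F and G be complete flags in ℂⁿ with F(b) = G(b) for every b with b ≤ a or b ≥ a + j. Then there exist complete flags H^0 = F, H^1, …, H^M = G such that for each 1 ≤ t ≤ M, H^t(b) = H^{t−1}(b) for every b ≠ c_t. (This is the fiberwise surjectivity of the refinement map from an ordinary Bott–Samelson variety onto the generalized Bott–Samelson variety of a zonotopal tiling, used to show that each generalized Bott–Samelson variety resolves the Schubert variety.) -/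
noncomputable section

/-- For `1 ≤ a ≤ n - 1`, the adjacent transposition `s_a ∈ S_n` interchanging `a` and
`a + 1` (in 1-based labels; 0-indexed it swaps `a - 1` and `a`); junk value `1` otherwise. -/
def sTrans (n : ℕ) (a : ℕ) : Equiv.Perm (Fin n) :=
  if h : 1 ≤ a ∧ a < n then Equiv.swap ⟨a - 1, by omega⟩ ⟨a, h.2⟩ else 1

/-- `c` is a reduced word for `w ∈ S_n`: a sequence of indices of adjacent transpositions
whose product is `w`, of minimal length among all such sequences. -/
def IsReducedWordFor (n : ℕ) (w : Equiv.Perm (Fin n)) (c : List ℕ) : Prop :=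
  (∀ a ∈ c, 1 ≤ a ∧ a ≤ n - 1) ∧ (c.map (sTrans n)).prod = w ∧
    ∀ d : List ℕ, (∀ a ∈ d, 1 ≤ a ∧ a ≤ n - 1) → (d.map (sTrans n)).prod = w →
      c.length ≤ d.length

namespace Stmt8Aux
open Module Submodule Finset

/-- Bruhat rank function: number of `i < q` with `w i < p`. -/
def rk (n : ℕ) (w : Equiv.Perm (Fin n)) (p q : ℕ) : ℕ :=
  (Finset.univ.filter fun i : Fin n => (i : ℕ) < q ∧ (w i : ℕ) < p).card

lemma rk_le_q (n : ℕ) (w : Equiv.Perm (Fin n)) (p q : ℕ) : rk n w p q ≤ q := by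
  have h := Finset.card_le_card_of_injOn (fun i : Fin n => (i : ℕ))
    (s := Finset.univ.filter fun i : Fin n => (i : ℕ) < q ∧ (w i : ℕ) < p)
    (t := Finset.range q)
    (fun i hi => by
      simp only [Finset.mem_coe, Finset.mem_filter, Finset.mem_univ, true_and] at hi
      exact Finset.mem_range.mpr hi.1)
    (fun x _ y _ h => Fin.val_injective h)
  simpa [rk] using h

lemma rk_le_p (n : ℕ) (w : Equiv.Perm (Fin n)) (p q : ℕ) : rk n w p q ≤ p := by
  have h := Finset.card_le_card_of_injOn (fun i : Fin n => ((w i : Fin n) : ℕ))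
    (s := Finset.univ.filter fun i : Fin n => (i : ℕ) < q ∧ (w i : ℕ) < p)
    (t := Finset.range p)
    (fun i hi => by
      simp only [Finset.mem_coe, Finset.mem_filter, Finset.mem_univ, true_and] at hi
      exact Finset.mem_range.mpr hi.2)
    (fun x _ y _ h => w.injective (Fin.val_injective h))
  simpa [rk] using h

lemma rk_mono (n : ℕ) (w : Equiv.Perm (Fin n)) {p p' : ℕ} (q : ℕ) (h : p ≤ p') :
    rk n w p q ≤ rk n w p' q := by
  apply Finset.card_le_card
  apply Finset.monotone_filter_right
  intro i hi
  exact fun hi' => ⟨hi'.1, lt_of_lt_of_le hi'.2 h⟩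

lemma rk_succ_le (n : ℕ) (w : Equiv.Perm (Fin n)) (p q : ℕ) :
    rk n w (p + 1) q ≤ rk n w p q + 1 := by
  unfold rk
  have hsub : (Finset.univ.filter fun i : Fin n => (i : ℕ) < q ∧ (w i : ℕ) < p + 1)
      ⊆ (Finset.univ.filter fun i : Fin n => (i : ℕ) < q ∧ (w i : ℕ) < p)
        ∪ (Finset.univ.filter fun i : Fin n => (w i : ℕ) = p) := by
    intro i hi
    simp only [Finset.mem_filter, Finset.mem_union, Finset.mem_univ, true_and] at *
    omega
  refine le_trans (Finset.card_le_card hsub) (le_trans (Finset.card_union_le _ _) ?_)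
  have h1 : (Finset.univ.filter fun i : Fin n => (w i : ℕ) = p).card ≤ 1 := by
    rw [Finset.card_le_one]
    intro x hx y hy
    simp only [Finset.mem_filter] at hx hy
    exact w.injective (Fin.val_injective (hx.2.trans hy.2.symm))
  omega

lemma rk_swap_mul (n k : ℕ) (hk1 : 1 ≤ k) (hkn : k < n) (w : Equiv.Perm (Fin n))
    (p q : ℕ) (hp : p ≠ k) : rk n (sTrans n k * w) p q = rk n w p q := by
  unfold rk
  congr 1
  refine Finset.filter_congr fun i _ => ?_
  have hmul : (sTrans n k * w) i = sTrans n k (w i) := rfl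
  refine and_congr_right fun _ => ?_
  rw [hmul, sTrans, dif_pos ⟨hk1, hkn⟩]
  rcases eq_or_ne (w i) ⟨k - 1, by omega⟩ with h | h
  · rw [h, Equiv.swap_apply_left]
    show k < p ↔ k - 1 < p
    omega
  · rcases eq_or_ne (w i) ⟨k, hkn⟩ with h2 | h2
    · rw [h2, Equiv.swap_apply_right]
      show k - 1 < p ↔ k < p
      omega
    · rw [Equiv.swap_apply_of_ne_of_ne h h2]

lemma le_rk_one (n p : ℕ) (hp : p ≤ n) : p ≤ rk n 1 p p := by
  rcases Nat.eq_zero_or_pos p with rfl | hppos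
  · exact Nat.zero_le _
  have hn : 0 < n := lt_of_lt_of_le hppos hp
  have h := Finset.card_le_card_of_injOn (fun m : ℕ => (⟨m % n, Nat.mod_lt _ hn⟩ : Fin n))
    (s := Finset.range p)
    (t := Finset.univ.filter fun i : Fin n => (i : ℕ) < p ∧ ((1 : Equiv.Perm (Fin n)) i : ℕ) < p)
    (fun m hm => by
      have hmp : m < p := Finset.mem_range.mp hm
      have hmn : m % n = m := Nat.mod_eq_of_lt (lt_of_lt_of_le hmp hp)
      refine Finset.mem_coe.mpr (Finset.mem_filter.mpr ⟨Finset.mem_univ _, ?_⟩)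
      constructor <;> · show m % n < p; omega)
    (fun x hx y hy hxy => by
      have hx' : x < p := Finset.mem_range.mp hx
      have hy' : y < p := Finset.mem_range.mp hy
      have := Fin.mk.injEq (x % n) _ (y % n) _ ▸ hxy
      have hv : x % n = y % n := congrArg Fin.val hxy
      rw [Nat.mod_eq_of_lt (lt_of_lt_of_le hx' hp), Nat.mod_eq_of_lt (lt_of_lt_of_le hy' hp)] at hv
      exact hv)
  simpa [rk] using h


lemma flags_eq (n : ℕ) (F G : Fin (n + 1) → Submodule ℂ (Fin n → ℂ))
    (hF : IsCompleteFlag n F) (hG : IsCompleteFlag n G)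
    (h : ∀ p q : Fin (n + 1), rk n 1 (p : ℕ) (q : ℕ) ≤ Module.finrank ℂ ↥(F p ⊓ G q)) :
    F = G := by
  funext p
  have hpn : (p : ℕ) ≤ n := by omega
  have h1 : (p : ℕ) ≤ Module.finrank ℂ ↥(F p ⊓ G p) :=
    le_trans (le_rk_one n (p : ℕ) hpn) (h p p)
  have e1 : F p ⊓ G p = F p :=
    Submodule.eq_of_le_of_finrank_le inf_le_left (by rw [hF.2 p]; exact h1)
  have e2 : F p ⊓ G p = G p :=
    Submodule.eq_of_le_of_finrank_le inf_le_right (by rw [hG.2 p]; exact h1)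
  rw [← e1, e2]

lemma finrank_sup_span (n : ℕ) (K : Submodule ℂ (Fin n → ℂ)) (v : Fin n → ℂ) (hv : v ∉ K) :
    Module.finrank ℂ ↥(K ⊔ ℂ ∙ v) = Module.finrank ℂ ↥K + 1 := by
  have hv0 : v ≠ 0 := fun h => hv (h ▸ K.zero_mem)
  have hinf : K ⊓ (ℂ ∙ v) = ⊥ := by
    rw [eq_bot_iff]
    rintro x hx
    rw [Submodule.mem_inf] at hx
    obtain ⟨hxK, hxv⟩ := hx
    rw [Submodule.mem_span_singleton] at hxv
    obtain ⟨c, rfl⟩ := hxv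
    rcases eq_or_ne c 0 with rfl | hc
    · simp
    · exfalso
      have hvK : v ∈ K := by
        have := K.smul_mem c⁻¹ hxK
        rwa [smul_smul, inv_mul_cancel₀ hc, one_smul] at this
      exact hv hvK
  have hsum := Submodule.finrank_sup_add_finrank_inf_eq K (ℂ ∙ v)
  rw [hinf, finrank_bot, finrank_span_singleton hv0] at hsum
  omega


lemma step (n k : ℕ) (hk1 : 1 ≤ k) (hkn : k < n) (w : Equiv.Perm (Fin n))
    (F G : Fin (n + 1) → Submodule ℂ (Fin n → ℂ))
    (hF : IsCompleteFlag n F) (hG : IsCompleteFlag n G)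
    (hC : ∀ p q : Fin (n + 1),
      rk n (sTrans n k * w) (p : ℕ) (q : ℕ) ≤ Module.finrank ℂ ↥(F p ⊓ G q)) :
    ∃ H : Fin (n + 1) → Submodule ℂ (Fin n → ℂ), IsCompleteFlag n H ∧
      (∀ b : Fin (n + 1), (b : ℕ) ≠ k → H b = F b) ∧
      ∀ p q : Fin (n + 1), rk n w (p : ℕ) (q : ℕ) ≤ Module.finrank ℂ ↥(H p ⊓ G q) := by
  classical
  have hkm : k - 1 < n + 1 := by omega
  have hkk : k < n + 1 := by omega
  have hkp : k + 1 < n + 1 := by omega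
  set Km : Submodule ℂ (Fin n → ℂ) := F ⟨k - 1, hkm⟩ with hKm
  set Kp : Submodule ℂ (Fin n → ℂ) := F ⟨k + 1, hkp⟩ with hKp
  have hrKm : Module.finrank ℂ ↥Km = k - 1 := hF.2 _
  have hrKp : Module.finrank ℂ ↥Kp = k + 1 := hF.2 _
  -- the minimal q with F(k+1) ⊓ G(q) ⊄ F(k-1)
  set P : ℕ → Prop :=
    fun q => ¬ (Kp ⊓ G ⟨min q n, Nat.lt_succ_of_le (Nat.min_le_right q n)⟩ ≤ Km) with hPdef
  have hPn : P n := by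
    have htop : G ⟨min n n, Nat.lt_succ_of_le (Nat.min_le_right n n)⟩ = ⊤ := by
      apply Submodule.eq_top_of_finrank_eq
      rw [hG.2, Module.finrank_fin_fun]
      simp
    rw [hPdef]
    simp only [htop, inf_top_eq]
    intro hle
    have h2 := Submodule.finrank_mono hle
    rw [hrKm, hrKp] at h2
    omega
  have hex : ∃ q, P q := ⟨n, hPn⟩
  set qs := Nat.find hex with hqsdef
  have hqsn : qs ≤ n := Nat.find_le hPn
  have hqs : P qs := Nat.find_spec hex
  have hqmin : ∀ m, m < qs → ¬ P m := fun m hm => Nat.find_min hex hm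
  have hidx : (⟨min qs n, Nat.lt_succ_of_le (Nat.min_le_right qs n)⟩ : Fin (n + 1))
      = ⟨qs, by omega⟩ := by
    apply Fin.ext
    simp [Nat.min_eq_left hqsn]
  rw [hPdef, hidx] at hqs
  obtain ⟨v, hvmem, hvKm⟩ := SetLike.not_le_iff_exists.mp hqs
  have hvKp : v ∈ Kp := (Submodule.mem_inf.mp hvmem).1
  have hvGqs : v ∈ G ⟨qs, by omega⟩ := (Submodule.mem_inf.mp hvmem).2
  set H : Fin (n + 1) → Submodule ℂ (Fin n → ℂ) :=
    fun b => if (b : ℕ) = k then Km ⊔ ℂ ∙ v else F b with hHdef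
  have hHk : ∀ b : Fin (n + 1), (b : ℕ) = k → H b = Km ⊔ ℂ ∙ v := by
    intro b hb; simp only [hHdef, if_pos hb]
  have hHne : ∀ b : Fin (n + 1), (b : ℕ) ≠ k → H b = F b := by
    intro b hb; simp only [hHdef, if_neg hb]
  have hHsub : ∀ b : Fin (n + 1), (b : ℕ) = k → H b ≤ Kp := by
    intro b hb
    rw [hHk b hb]
    refine sup_le (hF.1 ?_) ((Submodule.span_singleton_le_iff_mem _ _).mpr hvKp)
    rw [Fin.le_def]; show k - 1 ≤ k + 1; omega
  have hHsup : ∀ b : Fin (n + 1), (b : ℕ) = k → Km ≤ H b := by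
    intro b hb; rw [hHk b hb]; exact le_sup_left
  have hflag : IsCompleteFlag n H := by
    constructor
    · intro b b' hbb'
      have hv' : (b : ℕ) ≤ (b' : ℕ) := hbb'
      by_cases hb : (b : ℕ) = k
      · by_cases hb' : (b' : ℕ) = k
        · rw [hHk b hb, hHk b' hb']
        · have hkb' : k + 1 ≤ (b' : ℕ) := by omega
          rw [hHne b' hb']
          exact le_trans (hHsub b hb) (hF.1 (by rw [Fin.le_def]; exact hkb'))
      · by_cases hb' : (b' : ℕ) = k
        · have hbk : (b : ℕ) ≤ k - 1 := by omega
          rw [hHne b hb]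
          exact le_trans (hF.1 (show b ≤ ⟨k - 1, hkm⟩ by rw [Fin.le_def]; exact hbk))
            (hHsup b' hb')
        · rw [hHne b hb, hHne b' hb']
          exact hF.1 hbb'
    · intro b
      by_cases hb : (b : ℕ) = k
      · rw [hHk b hb, finrank_sup_span n Km v hvKm, hrKm, hb]
        omega
      · rw [hHne b hb]; exact hF.2 b
  refine ⟨H, hflag, hHne, ?_⟩
  intro p q
  by_cases hp : (p : ℕ) = k
  · by_cases hq : (q : ℕ) < qs
    · -- below q*: F(k+1) ⊓ G q ≤ F(k-1) ≤ H p
      have hidxq : (⟨min (q : ℕ) n, Nat.lt_succ_of_le (Nat.min_le_right _ n)⟩ : Fin (n + 1))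
          = q := by
        apply Fin.ext
        have : (q : ℕ) ≤ n := by omega
        simp [Nat.min_eq_left this]
      have hle : Kp ⊓ G q ≤ Km := by
        by_contra hcon
        exact hqmin (q : ℕ) hq
          (show ¬ Kp ⊓ G ⟨min (q : ℕ) n, Nat.lt_succ_of_le (Nat.min_le_right _ n)⟩ ≤ Km by
            rw [hidxq]; exact hcon)
      have hsub : Kp ⊓ G q ≤ H p ⊓ G q :=
        le_inf (le_trans hle (hHsup p hp)) inf_le_right
      calc rk n w (p : ℕ) (q : ℕ) ≤ rk n w (k + 1) (q : ℕ) := by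
              rw [hp]; exact rk_mono n w _ (Nat.le_succ k)
        _ = rk n (sTrans n k * w) (k + 1) (q : ℕ) :=
              (rk_swap_mul n k hk1 hkn w (k + 1) (q : ℕ) (by omega)).symm
        _ ≤ Module.finrank ℂ ↥(F ⟨k + 1, hkp⟩ ⊓ G q) := hC ⟨k + 1, hkp⟩ q
        _ ≤ Module.finrank ℂ ↥(H p ⊓ G q) := Submodule.finrank_mono hsub
    · -- above q*: add the vector v
      push_neg at hq
      have hvGq : v ∈ G q := by
        have hle : G ⟨qs, by omega⟩ ≤ G q := hG.1 (by rw [Fin.le_def]; exact hq)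
        exact hle hvGqs
      have hvnotin : v ∉ Km ⊓ G q := fun h => hvKm (Submodule.mem_inf.mp h).1
      have hvHp : v ∈ H p := by
        rw [hHk p hp]
        exact Submodule.mem_sup_right (Submodule.mem_span_singleton_self v)
      have hsub : (Km ⊓ G q) ⊔ (ℂ ∙ v) ≤ H p ⊓ G q := by
        refine sup_le (le_inf (le_trans inf_le_left (hHsup p hp)) inf_le_right) ?_
        exact (Submodule.span_singleton_le_iff_mem _ _).mpr (Submodule.mem_inf.mpr ⟨hvHp, hvGq⟩)
      have hrank : Module.finrank ℂ ↥((Km ⊓ G q) ⊔ ℂ ∙ v)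
          = Module.finrank ℂ ↥(Km ⊓ G q) + 1 := finrank_sup_span n _ v hvnotin
      have hkeq : k = (k - 1) + 1 := by omega
      calc rk n w (p : ℕ) (q : ℕ) = rk n w ((k - 1) + 1) (q : ℕ) := by rw [hp, ← hkeq]
        _ ≤ rk n w (k - 1) (q : ℕ) + 1 := rk_succ_le n w _ _
        _ = rk n (sTrans n k * w) (k - 1) (q : ℕ) + 1 := by
              rw [rk_swap_mul n k hk1 hkn w (k - 1) (q : ℕ) (by omega)]
        _ ≤ Module.finrank ℂ ↥(F ⟨k - 1, hkm⟩ ⊓ G q) + 1 :=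
              Nat.add_le_add_right (hC ⟨k - 1, hkm⟩ q) 1
        _ = Module.finrank ℂ ↥((Km ⊓ G q) ⊔ ℂ ∙ v) := by rw [hrank, hKm]
        _ ≤ Module.finrank ℂ ↥(H p ⊓ G q) := Submodule.finrank_mono hsub
  · rw [hHne p hp]
    rw [← rk_swap_mul n k hk1 hkn w (p : ℕ) (q : ℕ) hp]
    exact hC p q


lemma chain (n : ℕ) (G : Fin (n + 1) → Submodule ℂ (Fin n → ℂ)) (hG : IsCompleteFlag n G) :
    ∀ (M : ℕ) (c : Fin M → ℕ), (∀ t, 1 ≤ c t ∧ c t ≤ n - 1) →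
    ∀ F : Fin (n + 1) → Submodule ℂ (Fin n → ℂ), IsCompleteFlag n F →
    (∀ p q : Fin (n + 1),
      rk n ((List.ofFn c).map (sTrans n)).prod (p : ℕ) (q : ℕ)
        ≤ Module.finrank ℂ ↥(F p ⊓ G q)) →
    ∃ H : Fin (M + 1) → Fin (n + 1) → Submodule ℂ (Fin n → ℂ),
      (∀ t, IsCompleteFlag n (H t)) ∧ H 0 = F ∧ H (Fin.last M) = G ∧
      ∀ t : Fin M, ∀ b : Fin (n + 1), (b : ℕ) ≠ c t → H t.succ b = H t.castSucc b := by
  intro M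
  induction M with
  | zero =>
    intro c hc F hF hC
    have hone : ((List.ofFn c).map (sTrans n)).prod = 1 := by
      simp [List.ofFn_zero]
    rw [hone] at hC
    have hFG : F = G := flags_eq n F G hF hG hC
    exact ⟨fun _ => F, fun _ => hF, rfl, hFG, fun t => t.elim0⟩
  | succ M ih =>
    intro c hc F hF hC
    set c' : Fin M → ℕ := fun i => c i.succ with hc'def
    set w' := ((List.ofFn c').map (sTrans n)).prod with hw'
    have hprod : ((List.ofFn c).map (sTrans n)).prod = sTrans n (c 0) * w' := by
      rw [List.ofFn_succ, List.map_cons, List.prod_cons]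
    rw [hprod] at hC
    have hc0 := hc 0
    obtain ⟨H1, hH1flag, hH1b, hH1C⟩ :=
      step n (c 0) hc0.1 (by omega) w' F G hF hG hC
    obtain ⟨H', h'flag, h'0, h'last, h'step⟩ :=
      ih c' (fun t => hc t.succ) H1 hH1flag hH1C
    refine ⟨Fin.cases F H', ?_, ?_, ?_, ?_⟩
    · intro t
      induction t using Fin.cases with
      | zero => simpa using hF
      | succ j => simpa using h'flag j
    · simp
    · show Fin.cases F H' (Fin.last (M + 1)) = G
      rw [← Fin.succ_last, Fin.cases_succ, h'last]
    · intro t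
      induction t using Fin.cases with
      | zero =>
        intro b hb
        show Fin.cases (motive := fun _ => Fin (n + 1) → Submodule ℂ (Fin n → ℂ)) F H' (Fin.succ 0) b = Fin.cases (motive := fun _ => Fin (n + 1) → Submodule ℂ (Fin n → ℂ)) F H' (Fin.castSucc 0) b
        rw [Fin.castSucc_zero, Fin.cases_succ, Fin.cases_zero, h'0]
        exact hH1b b hb
      | succ j =>
        intro b hb
        show Fin.cases (motive := fun _ => Fin (n + 1) → Submodule ℂ (Fin n → ℂ)) F H' j.succ.succ b = Fin.cases (motive := fun _ => Fin (n + 1) → Submodule ℂ (Fin n → ℂ)) F H' j.succ.castSucc b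
        rw [← Fin.succ_castSucc, Fin.cases_succ, Fin.cases_succ]
        exact h'step j b hb

lemma rk_r_le (n a j p q : ℕ) (haj : a + j ≤ n) (r : Equiv.Perm (Fin n))
    (hr : ∀ t : Fin n,
      (a ≤ (t : ℕ) ∧ (t : ℕ) < a + j → ((r t : ℕ) = 2 * a + j - 1 - (t : ℕ))) ∧
      (((t : ℕ) < a ∨ a + j ≤ (t : ℕ)) → r t = t))
    (hpa : a < p) (hpj : p < a + j) (hqa : a < q) :
    rk n r p q ≤ a + (q - (2 * a + j - p)) := by
  have h := Finset.card_le_card_of_injOn (fun i : Fin n => (i : ℕ))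
    (s := Finset.univ.filter fun i : Fin n => (i : ℕ) < q ∧ (r i : ℕ) < p)
    (t := Finset.range a ∪ Finset.Ico (2 * a + j - p) q)
    (fun i hi => by
      simp only [Finset.mem_coe, Finset.mem_filter, Finset.mem_univ, true_and] at hi
      obtain ⟨hiq, hip⟩ := hi
      simp only [Finset.mem_coe, Finset.mem_union, Finset.mem_range, Finset.mem_Ico]
      rcases lt_or_ge (i : ℕ) a with h1 | h1
      · exact Or.inl h1
      rcases lt_or_ge (i : ℕ) (a + j) with h2 | h2
      · right
        have hri := (hr i).1 ⟨h1, h2⟩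
        rw [hri] at hip
        omega
      · exfalso
        have hri := (hr i).2 (Or.inr h2)
        rw [hri] at hip
        omega)
    (fun x _ y _ h => Fin.val_injective h)
  refine le_trans ?_ (le_trans h ?_)
  · exact le_of_eq rfl
  · refine le_trans (Finset.card_union_le _ _) ?_
    rw [Finset.card_range, Nat.card_Ico]

lemma initC (n a j : ℕ) (haj : a + j ≤ n) (r : Equiv.Perm (Fin n))
    (hr : ∀ t : Fin n,
      (a ≤ (t : ℕ) ∧ (t : ℕ) < a + j → ((r t : ℕ) = 2 * a + j - 1 - (t : ℕ))) ∧
      (((t : ℕ) < a ∨ a + j ≤ (t : ℕ)) → r t = t))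
    (F G : Fin (n + 1) → Submodule ℂ (Fin n → ℂ))
    (hF : IsCompleteFlag n F) (hG : IsCompleteFlag n G)
    (hFG : ∀ b : Fin (n + 1), (b : ℕ) ≤ a ∨ a + j ≤ (b : ℕ) → F b = G b) :
    ∀ p q : Fin (n + 1), rk n r (p : ℕ) (q : ℕ) ≤ Module.finrank ℂ ↥(F p ⊓ G q) := by
  intro p q
  by_cases hp : (p : ℕ) ≤ a ∨ a + j ≤ (p : ℕ)
  · have hpe : F p = G p := hFG p hp
    rcases le_total (q : ℕ) (p : ℕ) with h | h
    · have hle : G q ≤ F p ⊓ G q := by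
        refine le_inf ?_ le_rfl
        rw [hpe]
        exact hG.1 (by rw [Fin.le_def]; exact h)
      refine le_trans (rk_le_q n r _ _) ?_
      rw [← hG.2 q]
      exact Submodule.finrank_mono hle
    · have hle : F p ≤ F p ⊓ G q := by
        refine le_inf le_rfl ?_
        rw [hpe]
        exact hG.1 (by rw [Fin.le_def]; exact h)
      refine le_trans (rk_le_p n r _ _) ?_
      rw [← hF.2 p]
      exact Submodule.finrank_mono hle
  · by_cases hq : (q : ℕ) ≤ a ∨ a + j ≤ (q : ℕ)
    · have hqe : F q = G q := hFG q hq
      rcases le_total (p : ℕ) (q : ℕ) with h | h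
      · have hle : F p ≤ F p ⊓ G q := by
          refine le_inf le_rfl ?_
          rw [← hqe]
          exact hF.1 (by rw [Fin.le_def]; exact h)
        refine le_trans (rk_le_p n r _ _) ?_
        rw [← hF.2 p]
        exact Submodule.finrank_mono hle
      · have hle : G q ≤ F p ⊓ G q := by
          refine le_inf ?_ le_rfl
          rw [← hqe] at *
          exact hF.1 (by rw [Fin.le_def]; exact h)
        refine le_trans (rk_le_q n r _ _) ?_
        rw [← hG.2 q]
        exact Submodule.finrank_mono hle
    · push_neg at hp hq
      have hpa : a < (p : ℕ) := hp.1
      have hpj : (p : ℕ) < a + j := hp.2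
      have hqa : a < (q : ℕ) := hq.1
      have hqj : (q : ℕ) < a + j := hq.2
      have han : a < n + 1 := by omega
      have hajn : a + j < n + 1 := by omega
      -- lower bound a
      have hdim1 : a ≤ Module.finrank ℂ ↥(F p ⊓ G q) := by
        have h1 : F ⟨a, han⟩ ≤ F p := hF.1 (by rw [Fin.le_def]; exact le_of_lt hpa)
        have h2 : F ⟨a, han⟩ ≤ G q := by
          rw [hFG ⟨a, han⟩ (Or.inl (le_refl a))]
          exact hG.1 (by rw [Fin.le_def]; exact le_of_lt hqa)
        have := Submodule.finrank_mono (le_inf h1 h2)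
        rwa [hF.2 ⟨a, han⟩] at this
      -- lower bound p + q - (a + j)
      have hdim2 : (p : ℕ) + (q : ℕ) ≤ Module.finrank ℂ ↥(F p ⊓ G q) + (a + j) := by
        have hsum := Submodule.finrank_sup_add_finrank_inf_eq (F p) (G q)
        have hsup : F p ⊔ G q ≤ F ⟨a + j, hajn⟩ := by
          refine sup_le (hF.1 (by rw [Fin.le_def]; exact le_of_lt hpj)) ?_
          rw [hFG ⟨a + j, hajn⟩ (Or.inr (le_refl (a + j)))]
          exact hG.1 (by rw [Fin.le_def]; exact le_of_lt hqj)
        have h3 := Submodule.finrank_mono hsup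
        rw [hF.2 ⟨a + j, hajn⟩] at h3
        have h3' : Module.finrank ℂ ↥(F p ⊔ G q) ≤ a + j := h3
        rw [hF.2 p, hG.2 q] at hsum
        omega
      have hrk := rk_r_le n a j (p : ℕ) (q : ℕ) haj r hr hpa hpj hqa
      omega

end Stmt8Aux

/-- let `r ∈ S_n` reverse the (1-based) interval `{a+1, …, a+j}` (0-indexed:
`r(t) = 2a + j - 1 - t` for `a ≤ t < a + j`) and fix all other points, and let `c` be a
reduced word for `r`.  If complete flags `F`, `G` agree at every position `b ≤ a` or
`b ≥ a + j`, then there is a chain of complete flags `H^0 = F, …, H^M = G` where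
consecutive flags agree away from the position given by the corresponding letter of `c`. -/
theorem stmt8 (n M : ℕ) (hn : 2 ≤ n) (a j : ℕ) (hj : 2 ≤ j) (haj : a + j ≤ n)
    (r : Equiv.Perm (Fin n))
    (hr : ∀ t : Fin n,
      (a ≤ (t : ℕ) ∧ (t : ℕ) < a + j → ((r t : ℕ) = 2 * a + j - 1 - (t : ℕ))) ∧
      (((t : ℕ) < a ∨ a + j ≤ (t : ℕ)) → r t = t))
    (c : Fin M → ℕ) (hred : IsReducedWordFor n r (List.ofFn c))
    (F G : Fin (n + 1) → Submodule ℂ (Fin n → ℂ))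
    (hF : IsCompleteFlag n F) (hG : IsCompleteFlag n G)
    (hFG : ∀ b : Fin (n + 1), (b : ℕ) ≤ a ∨ a + j ≤ (b : ℕ) → F b = G b) :
    ∃ H : Fin (M + 1) → Fin (n + 1) → Submodule ℂ (Fin n → ℂ),
      (∀ t, IsCompleteFlag n (H t)) ∧ H 0 = F ∧ H (Fin.last M) = G ∧
      ∀ t : Fin M, ∀ b : Fin (n + 1), (b : ℕ) ≠ c t → H t.succ b = H t.castSucc b := by
  have hletters : ∀ t : Fin M, 1 ≤ c t ∧ c t ≤ n - 1 := by
    intro t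
    exact hred.1 (c t) (by rw [List.mem_ofFn]; exact ⟨t, rfl⟩)
  have hCr := Stmt8Aux.initC n a j haj r hr F G hF hG hFG
  have hC : ∀ p q : Fin (n + 1),
      Stmt8Aux.rk n ((List.ofFn c).map (sTrans n)).prod (p : ℕ) (q : ℕ)
        ≤ Module.finrank ℂ ↥(F p ⊓ G q) := by
    intro p q
    rw [hred.2.1]
    exact hCr p q
  exact Stmt8Aux.chain n G hG M c hletters F hF hC
end
end
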